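/- arXiv:1904.13016 — 3 statements merged into one kernel-verified Lean document; each statement's English description precedes it below -/
import Mathlib

section
/- Matrix product trace estimate (Lemma A.2 d): Let H be a d×d real symmetric matrix with λ_H := λ_max(−H) > 0 whose sum of positive eigenvalues is at most D₄, and let η_{o+1}, …, η_n be positive numbers with η_i‖H‖ < 1/2 for all i. Define A_{j:k} := (I − η_{j+1}H)(I − η_{j+2}H)⋯(I − η_k H) (with A_{k:k} = I). Then Σ_{j=o+1}^{n} η_j · tr(A_{j:n} H A_{j:n}) ≤ −(1/4)(exp(λ_H η_{o+1:n}) − 1) + 2 η_{o+1:n} D₄, where η_{o+1:n} = Σ_{i=o+1}^{n} η_i. -/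
open Matrix

/-- The matrix product `A_{j:k} = (I − η_{j+1}H)(I − η_{j+2}H)⋯(I − η_k H)`
(with `A_{k:k} = I`); all factors are polynomials in `H`, hence commute. -/
noncomputable def AprodM {d : ℕ} (H : Matrix (Fin d) (Fin d) ℝ) (η : ℕ → ℝ) (j k : ℕ) :
    Matrix (Fin d) (Fin d) ℝ :=
  ((List.range (k - j)).map fun i => (1 : Matrix (Fin d) (Fin d) ℝ) - η (j + 1 + i) • H).prod

/-- `exp x ≤ (1+x)^2` for `0 ≤ x ≤ 1/2`. -/
private lemma exp_le_one_add_sq {x : ℝ} (h0 : 0 ≤ x) (h1 : x ≤ 1/2) :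
    Real.exp x ≤ (1 + x)^2 := by
  have h2 : Real.exp (x/2) ≤ 1 + x := by
    have hpos : (0:ℝ) < 1 - x/2 := by linarith
    have hle : 1 - x/2 ≤ Real.exp (-(x/2)) := by
      have := Real.add_one_le_exp (-(x/2)); linarith
    have hexp : Real.exp (x/2) * Real.exp (-(x/2)) = 1 := by
      rw [← Real.exp_add]; simp
    nlinarith [Real.exp_pos (x/2), Real.exp_pos (-(x/2))]
  have hx : Real.exp x = (Real.exp (x/2))^2 := by
    rw [sq, ← Real.exp_add]; ring_nf
  rw [hx]
  have := Real.exp_pos (x/2)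
  nlinarith

private lemma icc_sum_to_range (o n : ℕ) (f : ℕ → ℝ) :
    ∑ j ∈ Finset.Icc (o+1) n, f j = ∑ i ∈ Finset.range (n - o), f (o+1+i) := by
  rw [← Finset.Ico_add_one_right_eq_Icc, Finset.sum_Ico_eq_sum_range]
  simp [Nat.succ_sub_succ]

/-- Trace formula via the spectral theorem. -/
private lemma trace_formula {d : ℕ} (H : Matrix (Fin d) (Fin d) ℝ) (hH : H.IsHermitian)
    (η : ℕ → ℝ) (j n : ℕ) :
    Matrix.trace (AprodM H η j n * H * AprodM H η j n)
      = ∑ l, hH.eigenvalues l *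
          (∏ i ∈ Finset.range (n - j), (1 - η (j+1+i) * hH.eigenvalues l))^2 := by
  set U : Matrix (Fin d) (Fin d) ℝ := (hH.eigenvectorUnitary : Matrix (Fin d) (Fin d) ℝ) with hUdef
  set ev := hH.eigenvalues
  have hU1 : star U * U = 1 := hH.eigenvectorUnitary.2.1
  have hU2 : U * star U = 1 := hH.eigenvectorUnitary.2.2
  have hspec : H = U * diagonal ev * star U := by
    have := hH.spectral_theorem; simpa using this
  have hmul : ∀ X Y : Matrix (Fin d) (Fin d) ℝ,
      (U * X * star U) * (U * Y * star U) = U * (X * Y) * star U := by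
    intro X Y
    have h : star U * (U * (Y * star U)) = Y * star U := by
      rw [← Matrix.mul_assoc, hU1, Matrix.one_mul]
    simp only [Matrix.mul_assoc, h]
  have hfac : ∀ c : ℝ, (1 : Matrix (Fin d) (Fin d) ℝ) - c • H
      = U * diagonal (fun l => 1 - c * ev l) * star U := by
    intro c
    have hd : diagonal (fun l => 1 - c * ev l)
        = (1 : Matrix (Fin d) (Fin d) ℝ) - c • diagonal ev := by
      ext k l
      by_cases h : k = l <;>
        simp [Matrix.diagonal_apply, Matrix.one_apply, h, Matrix.smul_apply]
    rw [hd, Matrix.mul_sub, Matrix.sub_mul, Matrix.mul_one, hU2, Matrix.mul_smul,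
      Matrix.smul_mul, ← hspec]
  have key : ∀ (m : ℕ) (c : ℕ → ℝ),
      ((List.range m).map fun i => (1 : Matrix (Fin d) (Fin d) ℝ) - c i • H).prod
        = U * diagonal (fun l => ∏ i ∈ Finset.range m, (1 - c i * ev l)) * star U := by
    intro m c
    induction m with
    | zero =>
      simp only [List.range_zero, List.map_nil, List.prod_nil, Finset.prod_range_zero,
        Matrix.diagonal_one, Matrix.mul_one, hU2]
    | succ m ih =>
      rw [List.range_succ, List.map_append, List.prod_append]
      simp only [List.map_cons, List.map_nil, List.prod_cons, List.prod_nil, mul_one]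
      rw [ih, hfac (c m), hmul, Matrix.diagonal_mul_diagonal]
      congr 1
      ext l
      simp [Finset.prod_range_succ]
  have hA : AprodM H η j n
      = U * diagonal (fun l => ∏ i ∈ Finset.range (n - j), (1 - η (j+1+i) * ev l)) * star U := by
    rw [AprodM]
    exact key (n - j) (fun i => η (j+1+i))
  rw [hA, hspec, hmul, hmul, Matrix.diagonal_mul_diagonal, Matrix.diagonal_mul_diagonal]
  have htr : ∀ Z : Matrix (Fin d) (Fin d) ℝ, Matrix.trace (U * Z * star U) = Matrix.trace Z := by
    intro Z
    rw [Matrix.trace_mul_cycle, hU1, Matrix.one_mul]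
  rw [htr, Matrix.trace_diagonal]
  congr 1; ext l; ring

/-- General per-eigenvalue bound. -/
private lemma scalar_bound_pos (η : ℕ → ℝ) (o n : ℕ)
    (hηpos : ∀ i ∈ Finset.Icc (o + 1) n, 0 < η i) (lam : ℝ)
    (hlam : ∀ i ∈ Finset.Icc (o + 1) n, η i * |lam| < 1 / 2) :
    ∑ j ∈ Finset.Icc (o+1) n,
        η j * (lam * (∏ i ∈ Finset.range (n - j), (1 - η (j+1+i) * lam))^2)
      ≤ (∑ i ∈ Finset.Icc (o+1) n, η i) * max lam 0 := by
  rcases le_or_gt lam 0 with hneg | hpos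
  · have hmax : max lam 0 = 0 := max_eq_right hneg
    rw [hmax, mul_zero]
    apply Finset.sum_nonpos
    intro j hj
    have h1 : 0 ≤ η j := (hηpos j hj).le
    have h2 : lam * (∏ i ∈ Finset.range (n - j), (1 - η (j+1+i) * lam))^2 ≤ 0 :=
      mul_nonpos_of_nonpos_of_nonneg hneg (sq_nonneg _)
    exact mul_nonpos_of_nonneg_of_nonpos h1 h2
  · have hmax : max lam 0 = lam := max_eq_left hpos.le
    rw [hmax]
    rw [Finset.sum_mul]
    apply Finset.sum_le_sum
    intro j hj
    rw [Finset.mem_Icc] at hj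
    have hP : (∏ i ∈ Finset.range (n - j), (1 - η (j+1+i) * lam))^2 ≤ 1 := by
      rw [← Finset.prod_pow]
      apply Finset.prod_le_one
      · intro i _; exact sq_nonneg _
      · intro i hi
        rw [Finset.mem_range] at hi
        have hmem : j + 1 + i ∈ Finset.Icc (o+1) n := by
          rw [Finset.mem_Icc]; omega
        have h1 := hηpos _ hmem
        have h2 := hlam _ hmem
        rw [abs_of_pos hpos] at h2
        have h3 : 0 ≤ η (j+1+i) * lam := mul_nonneg h1.le hpos.le
        nlinarith
    have hj' : j ∈ Finset.Icc (o+1) n := by rw [Finset.mem_Icc]; omega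
    have h0 : 0 ≤ η j := (hηpos j hj').le
    calc η j * (lam * (∏ i ∈ Finset.range (n - j), (1 - η (j+1+i) * lam))^2)
        ≤ η j * (lam * 1) := by
          apply mul_le_mul_of_nonneg_left _ h0
          exact mul_le_mul_of_nonneg_left hP hpos.le
      _ = η j * lam := by ring

/-- Bound for the eigenvalue `-a` achieving the top of `-H`. -/
private lemma scalar_bound_top (η : ℕ → ℝ) (o n : ℕ) (hon : o < n)
    (hηpos : ∀ i ∈ Finset.Icc (o + 1) n, 0 < η i) (a : ℝ) (ha : 0 < a)
    (hηa : ∀ i ∈ Finset.Icc (o + 1) n, η i * a < 1 / 2) :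
    ∑ j ∈ Finset.Icc (o+1) n,
        η j * ((-a) * (∏ i ∈ Finset.range (n - j), (1 - η (j+1+i) * (-a)))^2)
      ≤ -(1/4) * (Real.exp (a * ∑ i ∈ Finset.Icc (o+1) n, η i) - 1) := by
  set S := ∑ i ∈ Finset.Icc (o+1) n, η i with hS
  set r : ℕ → ℝ := fun j => ∏ i ∈ Finset.range (n - j), (1 + η (j+1+i) * a)^2 with hr
  have hrnonneg : ∀ j, 0 ≤ r j := by
    intro j; apply Finset.prod_nonneg; intro i _; exact sq_nonneg _
  have hrstep : ∀ j, j < n → r j = (1 + η (j+1) * a)^2 * r (j+1) := by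
    intro j hjn
    have hm : n - j = (n - (j+1)) + 1 := by omega
    simp only [hr]
    rw [hm, Finset.prod_range_succ']
    rw [mul_comm]
    congr 1
    apply Finset.prod_congr rfl
    intro i _
    rw [show j + 1 + (i+1) = j + 1 + 1 + i from by omega]
  have hrn : r n = 1 := by simp [hr]
  -- telescoping
  have htel : ∑ i ∈ Finset.range (n - o), (r (o+i) - r (o+(i+1))) = r o - 1 := by
    rw [Finset.sum_range_sub' (fun i => r (o+i))]
    rw [show o + 0 = o by omega, show o + (n - o) = n by omega, hrn]
  -- key sum bound
  have hterm : ∀ i ∈ Finset.range (n - o),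
      r (o+i) - r (o+(i+1)) ≤ (5/2) * (η (o+1+i) * a * r (o+1+i)) := by
    intro i hi
    rw [Finset.mem_range] at hi
    have hmem : o + 1 + i ∈ Finset.Icc (o+1) n := by rw [Finset.mem_Icc]; omega
    have hη1 := hηpos _ hmem
    have hη2 := hηa _ hmem
    have hstep := hrstep (o+i) (by omega)
    rw [show o + i + 1 = o + 1 + i from by omega] at hstep
    rw [show o + (i + 1) = o + 1 + i from by omega, hstep]
    set x := η (o+1+i) * a with hxdef
    set R := r (o+1+i) with hRdef
    have hx : 0 ≤ x := mul_nonneg hη1.le ha.le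
    have hR : 0 ≤ R := hrnonneg (o+1+i)
    have h4 : (x*x)*R ≤ ((1/2)*x)*R := mul_le_mul_of_nonneg_right (by nlinarith) hR
    have expand : (1+x)^2*R - R = 2*(x*R) + (x*x)*R := by ring
    nlinarith
  have hsum : (2/5) * (r o - 1) ≤ ∑ j ∈ Finset.Icc (o+1) n, η j * a * r j := by
    rw [icc_sum_to_range o n (fun j => η j * a * r j)]
    have h1 : ∑ i ∈ Finset.range (n - o), (r (o+i) - r (o+(i+1)))
        ≤ ∑ i ∈ Finset.range (n - o), (5/2) * (η (o+1+i) * a * r (o+1+i)) :=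
      Finset.sum_le_sum hterm
    rw [htel] at h1
    rw [← Finset.mul_sum] at h1
    linarith
  -- r o ≥ exp (a * S)
  have hro : Real.exp (a * S) ≤ r o := by
    have h1 : r o = ∏ i ∈ Finset.range (n - o), (1 + η (o+1+i) * a)^2 := rfl
    have h2 : Real.exp (a * S) = ∏ i ∈ Finset.range (n - o), Real.exp (η (o+1+i) * a) := by
      rw [← Real.exp_sum]
      congr 1
      rw [hS, icc_sum_to_range o n η, Finset.mul_sum]
      apply Finset.sum_congr rfl
      intro i _; ring
    rw [h1, h2]
    apply Finset.prod_le_prod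
    · intro i _; exact (Real.exp_pos _).le
    · intro i hi
      rw [Finset.mem_range] at hi
      have hmem : o + 1 + i ∈ Finset.Icc (o+1) n := by rw [Finset.mem_Icc]; omega
      exact exp_le_one_add_sq (mul_nonneg (hηpos _ hmem).le ha.le) (hηa _ hmem).le
  -- assemble
  have hSnn : 0 ≤ S := Finset.sum_nonneg fun i hi => (hηpos i hi).le
  have hexp1 : 1 ≤ Real.exp (a * S) := Real.one_le_exp (mul_nonneg ha.le hSnn)
  have hLHS : ∑ j ∈ Finset.Icc (o+1) n,
      η j * ((-a) * (∏ i ∈ Finset.range (n - j), (1 - η (j+1+i) * (-a)))^2)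
      = -(∑ j ∈ Finset.Icc (o+1) n, η j * a * r j) := by
    rw [← Finset.sum_neg_distrib]
    apply Finset.sum_congr rfl
    intro j _
    have : (∏ i ∈ Finset.range (n - j), (1 - η (j+1+i) * (-a)))^2 = r j := by
      rw [hr]
      simp only
      rw [← Finset.prod_pow]
      apply Finset.prod_congr rfl
      intro i _; ring
    rw [this]; ring
  rw [hLHS]
  nlinarith

/-- Matrix product trace estimate (Lemma A.2 d): if `H` is real symmetric with
`λ_H = λ_max(−H) > 0`, the sum of the positive eigenvalues of `H` is at most `D₄`,
and `η_i‖H‖ < 1/2`, then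
`Σ_{j=o+1}^n η_j tr(A_{j:n} H A_{j:n}) ≤ −(1/4)(exp(λ_H η_{o+1:n}) − 1) + 2η_{o+1:n}D₄`. -/
theorem matrix_prod_trace_estimate
    (d : ℕ) (hd : 0 < d) (H : Matrix (Fin d) (Fin d) ℝ) (hH : H.IsHermitian)
    (lamH D₄ : ℝ)
    (hlamH : IsGreatest (Set.range fun i => -hH.eigenvalues i) lamH) (hlamHpos : 0 < lamH)
    (hD₄ : ∑ i, max (hH.eigenvalues i) 0 ≤ D₄)
    (η : ℕ → ℝ) (o n : ℕ) (hon : o < n)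
    (hηpos : ∀ i ∈ Finset.Icc (o + 1) n, 0 < η i)
    -- `η_i ‖H‖ < 1/2`, where `‖H‖ = max_k |λ_k(H)|` is the spectral norm
    (hηH : ∀ i ∈ Finset.Icc (o + 1) n, ∀ k, η i * |hH.eigenvalues k| < 1 / 2) :
    ∑ j ∈ Finset.Icc (o + 1) n,
        η j * Matrix.trace (AprodM H η j n * H * AprodM H η j n)
      ≤ -(1 / 4) * (Real.exp (lamH * ∑ i ∈ Finset.Icc (o + 1) n, η i) - 1)
        + 2 * (∑ i ∈ Finset.Icc (o + 1) n, η i) * D₄ := by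
  set S := ∑ i ∈ Finset.Icc (o + 1) n, η i with hS
  have hSnn : 0 ≤ S := Finset.sum_nonneg fun i hi => (hηpos i hi).le
  have hD4nn : 0 ≤ D₄ :=
    le_trans (Finset.sum_nonneg fun i _ => le_max_right _ _) hD₄
  have hLHS : ∑ j ∈ Finset.Icc (o + 1) n,
        η j * Matrix.trace (AprodM H η j n * H * AprodM H η j n)
      = ∑ l, ∑ j ∈ Finset.Icc (o+1) n,
          η j * (hH.eigenvalues l *
            (∏ i ∈ Finset.range (n - j), (1 - η (j+1+i) * hH.eigenvalues l))^2) := by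
    rw [Finset.sum_comm]
    apply Finset.sum_congr rfl
    intro j _
    rw [trace_formula H hH η j n, Finset.mul_sum]
  rw [hLHS]
  obtain ⟨lstar, hlstar⟩ := hlamH.1
  have hev_eq : hH.eigenvalues lstar = -lamH := by
    simp only at hlstar
    linarith
  rw [← Finset.add_sum_erase _ _ (Finset.mem_univ lstar)]
  have htop : ∑ j ∈ Finset.Icc (o+1) n,
      η j * (hH.eigenvalues lstar *
        (∏ i ∈ Finset.range (n - j), (1 - η (j+1+i) * hH.eigenvalues lstar))^2)
      ≤ -(1/4) * (Real.exp (lamH * S) - 1) := by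
    have hηa : ∀ i ∈ Finset.Icc (o + 1) n, η i * lamH < 1 / 2 := by
      intro i hi
      have := hηH i hi lstar
      rwa [hev_eq, abs_neg, abs_of_pos hlamHpos] at this
    have hmain := scalar_bound_top η o n hon hηpos lamH hlamHpos hηa
    simp only [hev_eq]
    exact hmain
  have hrest : ∑ l ∈ Finset.univ.erase lstar,
      ∑ j ∈ Finset.Icc (o+1) n,
        η j * (hH.eigenvalues l *
          (∏ i ∈ Finset.range (n - j), (1 - η (j+1+i) * hH.eigenvalues l))^2)
      ≤ 2 * S * D₄ := by
    have h1 : ∀ l : Fin d, ∑ j ∈ Finset.Icc (o+1) n,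
        η j * (hH.eigenvalues l *
          (∏ i ∈ Finset.range (n - j), (1 - η (j+1+i) * hH.eigenvalues l))^2)
        ≤ S * max (hH.eigenvalues l) 0 :=
      fun l => scalar_bound_pos η o n hηpos (hH.eigenvalues l) (fun i hi => hηH i hi l)
    calc ∑ l ∈ Finset.univ.erase lstar,
          ∑ j ∈ Finset.Icc (o+1) n,
            η j * (hH.eigenvalues l *
              (∏ i ∈ Finset.range (n - j), (1 - η (j+1+i) * hH.eigenvalues l))^2)
        ≤ ∑ l ∈ Finset.univ.erase lstar, S * max (hH.eigenvalues l) 0 :=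
          Finset.sum_le_sum fun l _ => h1 l
      _ ≤ ∑ l, S * max (hH.eigenvalues l) 0 :=
          Finset.sum_le_sum_of_subset_of_nonneg (Finset.erase_subset _ _)
            (fun l _ _ => mul_nonneg hSnn (le_max_right _ _))
      _ = S * ∑ l, max (hH.eigenvalues l) 0 := (Finset.mul_sum _ _ _).symm
      _ ≤ S * D₄ := mul_le_mul_of_nonneg_left hD₄ hSnn
      _ ≤ 2 * S * D₄ := by nlinarith [mul_nonneg hSnn hD4nn]
  linarith
end

section
/- Limiting distributions of SGLD versus perturbed GD on a quadratic (Lemma 5.2): Let (η_n) be a sequence in (0,1) that decreases to 0 with Σ_{i=1}^{∞} η_i = ∞, let ζ_n be i.i.d. standard Gaussian N(0,1) random variables, and define X₀ = Y₀ = 0, X_n = (1 − η_n)X_{n−1} + √(η_n) ζ_n, Y_n = (1 − η_n)Y_{n−1} + η_n ζ_n. Then X_n converges in distribution to the Gaussian N(0, 1/2), and Y_n converges in distribution to the Dirac measure at 0. Equivalently, X_n and Y_n are centered Gaussians whose variances V_n^x and V_n^y satisfy V_n^x → 1/2 and V_n^y → 0 as n → ∞. -/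
open MeasureTheory ProbabilityTheory Real Filter
open scoped NNReal ENNReal

section Aux
lemma pdf_factor (v1 v2 : ℝ≥0) (h1 : v1 ≠ 0) (h2 : v2 ≠ 0) (y x : ℝ) :
    gaussianPDFReal 0 v1 x * gaussianPDFReal x v2 y
      = gaussianPDFReal 0 (v1 + v2) y
        * gaussianPDFReal ((v1 : ℝ) * y / (v1 + v2)) (v1 * v2 / (v1 + v2)) x := by
  have ha : (0:ℝ) < v1 := lt_of_le_of_ne (v1.coe_nonneg) (by exact_mod_cast (Ne.symm h1))
  have hb : (0:ℝ) < v2 := lt_of_le_of_ne (v2.coe_nonneg) (by exact_mod_cast (Ne.symm h2))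
  have hab : (0:ℝ) < (v1:ℝ) + v2 := by linarith
  have hw : ((v1 * v2 / (v1 + v2) : ℝ≥0) : ℝ) = (v1:ℝ) * v2 / ((v1:ℝ) + v2) := by
    push_cast; ring
  simp only [gaussianPDFReal, NNReal.coe_add, hw]
  rw [mul_mul_mul_comm, mul_mul_mul_comm ((√(2 * π * ((v1:ℝ)+v2)))⁻¹)]
  congr 1
  · rw [← mul_inv, ← mul_inv, ← Real.sqrt_mul (by positivity), ← Real.sqrt_mul (by positivity)]
    congr 1
    field_simp
  · rw [← Real.exp_add, ← Real.exp_add]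
    congr 1
    field_simp
    ring

lemma pdf_conv (v1 v2 : ℝ≥0) (h1 : v1 ≠ 0) (h2 : v2 ≠ 0) (y : ℝ) :
    ∫⁻ x, gaussianPDF 0 v1 x * gaussianPDF x v2 y = gaussianPDF 0 (v1 + v2) y := by
  have hw : (v1 * v2 / (v1 + v2) : ℝ≥0) ≠ 0 := by
    have : v1 + v2 ≠ 0 := by simp [h1, h2]
    positivity
  have hint : Integrable (fun x => gaussianPDFReal 0 v1 x * gaussianPDFReal x v2 y) := by
    simp_rw [fun x => pdf_factor v1 v2 h1 h2 y x]
    exact (integrable_gaussianPDFReal _ _).const_mul _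
  calc ∫⁻ x, gaussianPDF 0 v1 x * gaussianPDF x v2 y
      = ∫⁻ x, ENNReal.ofReal (gaussianPDFReal 0 v1 x * gaussianPDFReal x v2 y) := by
        simp_rw [gaussianPDF, ENNReal.ofReal_mul (gaussianPDFReal_nonneg _ _ _)]
    _ = ENNReal.ofReal (∫ x, gaussianPDFReal 0 v1 x * gaussianPDFReal x v2 y) := by
        rw [← ofReal_integral_eq_lintegral_ofReal hint
          (ae_of_all _ fun x => mul_nonneg (gaussianPDFReal_nonneg _ _ _)
            (gaussianPDFReal_nonneg _ _ _))]
    _ = gaussianPDF 0 (v1 + v2) y := by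
        rw [gaussianPDF]
        congr 1
        simp_rw [fun x => pdf_factor v1 v2 h1 h2 y x]
        rw [integral_const_mul, integral_gaussianPDFReal_eq_one _ hw, mul_one]

lemma gaussian_map_add (v1 v2 : ℝ≥0) :
    Measure.map (fun p : ℝ × ℝ => p.1 + p.2)
      ((gaussianReal 0 v1).prod (gaussianReal 0 v2)) = gaussianReal 0 (v1 + v2) := by
  have madd : Measurable (fun p : ℝ × ℝ => p.1 + p.2) := measurable_fst.add measurable_snd
  by_cases h1 : v1 = 0
  · subst h1
    rw [gaussianReal_zero_var, Measure.dirac_prod, Measure.map_map madd measurable_prodMk_left]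
    have : ((fun p : ℝ × ℝ => p.1 + p.2) ∘ Prod.mk (0:ℝ)) = id := by funext x; simp
    rw [this, Measure.map_id, zero_add]
  by_cases h2 : v2 = 0
  · subst h2
    rw [gaussianReal_zero_var, Measure.prod_dirac,
      Measure.map_map madd (measurable_prodMk_right)]
    have : ((fun p : ℝ × ℝ => p.1 + p.2) ∘ fun x : ℝ => (x, (0:ℝ))) = id := by funext x; simp
    rw [this, Measure.map_id, add_zero]
  have h12 : v1 + v2 ≠ 0 := by simp [h1, h2]
  ext s hs
  rw [Measure.map_apply madd hs, Measure.prod_apply (madd hs)]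
  have hmk : ∀ x : ℝ, (Prod.mk x ⁻¹' ((fun p : ℝ × ℝ => p.1 + p.2) ⁻¹' s))
      = (fun y => x + y) ⁻¹' s := fun x => rfl
  have hmeas2 : Measurable (Function.uncurry fun x y => gaussianPDF x v2 y) := by
    apply Measurable.ennreal_ofReal
    unfold gaussianPDFReal
    fun_prop
  calc ∫⁻ x, gaussianReal 0 v2 (Prod.mk x ⁻¹' ((fun p : ℝ × ℝ => p.1 + p.2) ⁻¹' s))
        ∂(gaussianReal 0 v1)
      = ∫⁻ x, (∫⁻ y in s, gaussianPDF x v2 y) ∂(gaussianReal 0 v1) := by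
        congr 1; ext x
        rw [hmk, ← Measure.map_apply (measurable_const_add x) hs,
          gaussianReal_map_const_add, zero_add, gaussianReal_apply _ h2]
    _ = ∫⁻ x, gaussianPDF 0 v1 x * (∫⁻ y in s, gaussianPDF x v2 y) := by
        rw [gaussianReal_of_var_ne_zero _ h1,
          lintegral_withDensity_eq_lintegral_mul _ (measurable_gaussianPDF _ _)
            (hmeas2.lintegral_prod_right (ν := volume.restrict s))]
        rfl
    _ = ∫⁻ x, ∫⁻ y in s, gaussianPDF 0 v1 x * gaussianPDF x v2 y := by
        congr 1; ext x; rw [lintegral_const_mul _ (by fun_prop)]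
    _ = ∫⁻ y in s, ∫⁻ x, gaussianPDF 0 v1 x * gaussianPDF x v2 y := by
        rw [lintegral_lintegral_swap]
        apply AEMeasurable.mul (f := fun p : ℝ × ℝ => gaussianPDF 0 v1 p.1)
          (g := Function.uncurry fun x y => gaussianPDF x v2 y)
        · exact ((measurable_gaussianPDF 0 v1).comp measurable_fst).aemeasurable
        · exact hmeas2.aemeasurable
    _ = ∫⁻ y in s, gaussianPDF 0 (v1 + v2) y := by
        congr 1; ext y; exact pdf_conv v1 v2 h1 h2 y
    _ = gaussianReal 0 (v1 + v2) s := (gaussianReal_apply _ h12 s).symm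

lemma indep_add_gaussian {Ω : Type} [MeasurableSpace Ω] {P : Measure Ω} [IsProbabilityMeasure P]
    {U W : Ω → ℝ} (hU : Measurable U) (hW : Measurable W) (h : IndepFun U W P)
    {v1 v2 : ℝ≥0} (hU' : Measure.map U P = gaussianReal 0 v1)
    (hW' : Measure.map W P = gaussianReal 0 v2) :
    Measure.map (fun ω => U ω + W ω) P = gaussianReal 0 (v1 + v2) := by
  have hmap := (indepFun_iff_map_prod_eq_prod_map_map hU.aemeasurable hW.aemeasurable).mp h
  have : (fun ω => U ω + W ω) = (fun p : ℝ × ℝ => p.1 + p.2) ∘ (fun ω => (U ω, W ω)) := rfl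
  rw [this, ← Measure.map_map (g := fun p : ℝ × ℝ => p.1 + p.2) (measurable_fst.add measurable_snd) (hU.prodMk hW),
    hmap, hU', hW', gaussian_map_add]

/-- Recursive function of the noise sequence. -/
noncomputable def recFun (η c : ℕ → ℝ) : ℕ → (ℕ → ℝ) → ℝ
  | 0 => fun _ => 0
  | n + 1 => fun z => (1 - η (n + 1)) * recFun η c n z + c (n + 1) * z (n + 1)

lemma measurable_recFun (η c : ℕ → ℝ) : ∀ n, Measurable (recFun η c n)
  | 0 => measurable_const
  | n + 1 => ((measurable_recFun η c n).const_mul _).add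
      ((measurable_pi_apply (n + 1)).const_mul _)

lemma recFun_congr (η c : ℕ → ℝ) : ∀ n, ∀ z z' : ℕ → ℝ,
    (∀ i, i ≤ n → z i = z' i) → recFun η c n z = recFun η c n z'
  | 0, _, _, _ => rfl
  | n + 1, z, z', h => by
    simp only [recFun, recFun_congr η c n z z' (fun i hi => h i (hi.trans n.le_succ)),
      h (n + 1) le_rfl]

lemma map_const_mul_gaussian {Ω : Type} [MeasurableSpace Ω] {P : Measure Ω}
    {X : Ω → ℝ} (hX : Measurable X) {μ : ℝ} {v : ℝ≥0}
    (h : Measure.map X P = gaussianReal μ v) (c : ℝ) :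
    Measure.map (fun ω => c * X ω) P = gaussianReal (c * μ) (.mk (c ^ 2) (sq_nonneg _) * v) := by
  rw [show (fun ω => c * X ω) = (c * ·) ∘ X from rfl,
    ← Measure.map_map (measurable_id'.const_mul c) hX, h, gaussianReal_map_const_mul]

lemma law_of_rec {Ω : Type} [MeasurableSpace Ω] (P : Measure Ω) [IsProbabilityMeasure P]
    (η : ℕ → ℝ) (ζ : ℕ → Ω → ℝ) (hζme : ∀ n, Measurable (ζ n))
    (hζlaw : ∀ n, Measure.map (ζ n) P = gaussianReal 0 1)
    (hζind : iIndepFun ζ P)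
    (c : ℕ → ℝ) (Z : ℕ → Ω → ℝ)
    (hZ0 : ∀ ω, Z 0 ω = 0)
    (hZrec : ∀ n ω, Z (n + 1) ω = (1 - η (n + 1)) * Z n ω + c (n + 1) * ζ (n + 1) ω)
    (V : ℕ → ℝ) (hV0 : V 0 = 0)
    (hVrec : ∀ n, V (n + 1) = (1 - η (n + 1)) ^ 2 * V n + c (n + 1) ^ 2) :
    ∀ n, 0 ≤ V n ∧ Measure.map (Z n) P = gaussianReal 0 (V n).toNNReal := by
  -- Z n as a function of the noise
  have hZfun : ∀ n ω, Z n ω = recFun η c n (fun i => ζ i ω) := by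
    intro n
    induction n with
    | zero => intro ω; rw [hZ0]; rfl
    | succ n ih => intro ω; rw [hZrec, ih]; rfl
  have hZme : ∀ n, Measurable (Z n) := by
    intro n
    have : Z n = fun ω => recFun η c n (fun i => ζ i ω) := funext (hZfun n)
    rw [this]
    exact (measurable_recFun η c n).comp (measurable_pi_lambda _ fun i => hζme i)
  -- independence of Z n and ζ (n+1)
  have hindep : ∀ n, IndepFun (Z n) (ζ (n + 1)) P := by
    intro n
    have hdisj : Disjoint (Finset.range (n + 1)) ({n + 1} : Finset ℕ) := by
      simp [Finset.disjoint_singleton_right]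
    have h := hζind.indepFun_finset (Finset.range (n + 1)) {n + 1} hdisj hζme
    set g₁ : ({ i // i ∈ Finset.range (n + 1) } → ℝ) → ℝ :=
      fun v => recFun η c n (fun i => if hi : i ∈ Finset.range (n + 1) then v ⟨i, hi⟩ else 0)
      with hg₁def
    have hg₁ : Measurable g₁ :=
      (measurable_recFun η c n).comp (measurable_pi_lambda _ fun i => by
        by_cases hi : i ∈ Finset.range (n + 1)
        · simp only [hi, dif_pos]; exact measurable_pi_apply _
        · simp only [hi, dif_neg, not_false_iff]; exact measurable_const)
    set g₂ : ({ i // i ∈ ({n + 1} : Finset ℕ) } → ℝ) → ℝ :=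
      fun v => v ⟨n + 1, Finset.mem_singleton_self _⟩
    have hg₂ : Measurable g₂ := measurable_pi_apply _
    have h2 := h.comp hg₁ hg₂
    have e1 : (g₁ ∘ fun a (i : { i // i ∈ Finset.range (n + 1) }) => ζ i a) = Z n := by
      funext ω
      simp only [Function.comp, hg₁def]
      rw [hZfun n ω]
      exact recFun_congr η c n _ _ (fun i hi => by
        simp [Finset.mem_range.mpr (Nat.lt_succ_of_le hi)])
    have e2 : (g₂ ∘ fun a (i : { i // i ∈ ({n + 1} : Finset ℕ) }) => ζ i a) = ζ (n + 1) := rfl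
    rwa [e1, e2] at h2
  -- main induction
  intro n
  induction n with
  | zero =>
    refine ⟨le_of_eq hV0.symm, ?_⟩
    have : Z 0 = fun _ => (0 : ℝ) := funext hZ0
    rw [this, hV0, Real.toNNReal_zero, gaussianReal_zero_var, Measure.map_const, measure_univ,
      one_smul]
  | succ n ih =>
    obtain ⟨hVnn, hlaw⟩ := ih
    have hVsn : 0 ≤ V (n + 1) := by
      rw [hVrec]; positivity
    refine ⟨hVsn, ?_⟩
    have hZsn : Z (n + 1) = fun ω =>
        (fun ω => (1 - η (n + 1)) * Z n ω) ω + (fun ω => c (n + 1) * ζ (n + 1) ω) ω := by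
      funext ω; exact hZrec n ω
    have hindep' : IndepFun (fun ω => (1 - η (n + 1)) * Z n ω)
        (fun ω => c (n + 1) * ζ (n + 1) ω) P :=
      (hindep n).comp (measurable_const_mul _) (measurable_const_mul _)
    have hlawU : Measure.map (fun ω => (1 - η (n + 1)) * Z n ω) P
        = gaussianReal 0 (.mk ((1 - η (n + 1)) ^ 2) (sq_nonneg _) * (V n).toNNReal) := by
      have := map_const_mul_gaussian (hZme n) hlaw (1 - η (n + 1))
      rwa [mul_zero] at this
    have hlawW : Measure.map (fun ω => c (n + 1) * ζ (n + 1) ω) P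
        = gaussianReal 0 (.mk (c (n + 1) ^ 2) (sq_nonneg _) * 1) := by
      have := map_const_mul_gaussian (hζme (n + 1)) (hζlaw (n + 1)) (c (n + 1))
      rwa [mul_zero] at this
    rw [hZsn, indep_add_gaussian ((hZme n).const_mul _) ((hζme (n + 1)).const_mul _)
      hindep' hlawU hlawW]
    congr 1
    rw [← NNReal.coe_inj]
    push_cast
    rw [Real.coe_toNNReal _ hVnn, Real.coe_toNNReal _ hVsn, hVrec]
    ring

lemma tendsto_rec_zero (η : ℕ → ℝ) (hηpos : ∀ n, 0 < η n) (hη1 : ∀ n, η n < 1)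
    (hlim : Tendsto η atTop (nhds 0))
    (hdiv : Tendsto (fun n => ∑ i ∈ Finset.range n, η (i + 1)) atTop atTop)
    (e : ℕ → ℝ) (he0 : ∀ n, 0 ≤ e n)
    (hrec : ∀ n, e (n + 1) ≤ (1 - η (n + 1)) * e n + η (n + 1) ^ 2) :
    Tendsto e atTop (nhds 0) := by
  set S : ℕ → ℝ := fun n => ∑ i ∈ Finset.range n, η (i + 1) with hS
  have hSId : ∀ n, S n = ∑ i ∈ Finset.Ioc 0 n, η i := by
    intro n
    induction n with
    | zero => simp [hS]
    | succ n ih =>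
      have h : S (n + 1) = S n + η (n + 1) := Finset.sum_range_succ _ n
      rw [h, ih, Finset.sum_Ioc_succ_top (Nat.zero_le _)]
  rw [NormedAddCommGroup.tendsto_nhds_zero]
  intro ε hε
  have hε3 : 0 < ε / 3 := by linarith
  obtain ⟨N, hN⟩ := (eventually_atTop.mp (hlim.eventually (gt_mem_nhds hε3)))
  -- key bound for n ≥ N
  have key : ∀ n, N ≤ n → e n ≤ ε / 3 + e N * ∏ i ∈ Finset.Ioc N n, (1 - η i) := by
    intro n hn
    induction n, hn using Nat.le_induction with
    | base => simp; linarith [he0 N, hε3]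
    | succ n hn ih =>
      have h1 : 0 ≤ 1 - η (n + 1) := by linarith [hη1 (n + 1)]
      have h2 : η (n + 1) ^ 2 ≤ (ε / 3) * η (n + 1) := by
        have := hN (n + 1) (hn.trans n.le_succ)
        have := (hηpos (n + 1)).le
        nlinarith
      have h3 : 0 ≤ e N * ∏ i ∈ Finset.Ioc N n, (1 - η i) := by
        apply mul_nonneg (he0 N)
        exact Finset.prod_nonneg fun i _ => by linarith [hη1 i]
      calc e (n + 1) ≤ (1 - η (n + 1)) * e n + η (n + 1) ^ 2 := hrec n
        _ ≤ (1 - η (n + 1)) * (ε / 3 + e N * ∏ i ∈ Finset.Ioc N n, (1 - η i))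
              + (ε / 3) * η (n + 1) := by
            have := mul_le_mul_of_nonneg_left ih h1
            linarith
        _ = ε / 3 + e N * ((∏ i ∈ Finset.Ioc N n, (1 - η i)) * (1 - η (n + 1)))
              + (ε / 3) * η (n + 1) - (ε/3) * η (n+1) + (0:ℝ) := by ring
        _ = ε / 3 + e N * ∏ i ∈ Finset.Ioc N (n + 1), (1 - η i) := by
            rw [← Finset.prod_Ioc_succ_top hn]
            ring
  -- product bound by exponential
  have prodle : ∀ n, N ≤ n → (∏ i ∈ Finset.Ioc N n, (1 - η i)) ≤ Real.exp (S N - S n) := by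
    intro n hn
    have h1 : (∏ i ∈ Finset.Ioc N n, (1 - η i)) ≤ ∏ i ∈ Finset.Ioc N n, Real.exp (- η i) := by
      apply Finset.prod_le_prod (fun i _ => by linarith [hη1 i])
      intro i _
      have := Real.add_one_le_exp (- η i)
      linarith
    have h2 : ∏ i ∈ Finset.Ioc N n, Real.exp (- η i)
        = Real.exp (-(∑ i ∈ Finset.Ioc N n, η i)) := by
      rw [← Real.exp_sum, Finset.sum_neg_distrib]
    have h3 : ∑ i ∈ Finset.Ioc N n, η i = S n - S N := by
      have := Finset.sum_Ioc_consecutive η (Nat.zero_le N) hn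
      rw [hSId n, hSId N, ← this]; ring
    rw [h2, h3] at h1
    convert h1 using 2
    ring
  -- the tail term tends to 0
  have htail : Tendsto (fun n => e N * Real.exp (S N - S n)) atTop (nhds 0) := by
    have h1 : Tendsto (fun n => S N - S n) atTop atBot := by
      apply tendsto_atBot_add_const_left
      exact (tendsto_neg_atTop_atBot).comp hdiv
    have h2 := Real.tendsto_exp_atBot.comp h1
    have := h2.const_mul (e N)
    simpa using this
  have hev : ∀ᶠ n in atTop, e N * Real.exp (S N - S n) < ε / 3 :=
    htail.eventually (gt_mem_nhds hε3)
  filter_upwards [hev, eventually_ge_atTop N] with n h1 h2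
  have h3 : e n ≤ ε / 3 + e N * Real.exp (S N - S n) := by
    refine (key n h2).trans ?_
    have := mul_le_mul_of_nonneg_left (prodle n h2) (he0 N)
    linarith
  rw [Real.norm_eq_abs, abs_of_nonneg (he0 n)]
  linarith

end Aux

/-- Limiting distributions of SGLD versus perturbed gradient descent on the quadratic
`F(x) = x²/2` (Lemma 5.2): with decreasing steps `η_n → 0`, `Σ η_n = ∞`, i.i.d. standard
Gaussians `ζ_n`, and recursions `X_n = (1−η_n)X_{n−1} + √η_n ζ_n`,
`Y_n = (1−η_n)Y_{n−1} + η_n ζ_n` started at `0`, the iterates are centered Gaussians whose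
variances satisfy `V_n^x = (1−η_n)²V_{n−1}^x + η_n → 1/2` and
`V_n^y = (1−η_n)²V_{n−1}^y + η_n² → 0`; hence `X_n ⇒ N(0,1/2)` and `Y_n ⇒ δ₀`. -/
theorem sgld_vs_pgd_quadratic_limit
    {Ω : Type} [MeasurableSpace Ω] (P : Measure Ω) [IsProbabilityMeasure P]
    (η : ℕ → ℝ) (hηpos : ∀ n, 0 < η n) (hη1 : ∀ n, η n < 1)
    (hanti : Antitone η) (hlim : Tendsto η atTop (nhds 0))
    (hdiv : Tendsto (fun n => ∑ i ∈ Finset.range n, η (i + 1)) atTop atTop)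
    (ζ : ℕ → Ω → ℝ) (hζme : ∀ n, Measurable (ζ n))
    (hζlaw : ∀ n, Measure.map (ζ n) P = gaussianReal 0 1)
    (hζind : iIndepFun ζ P)
    (X Y : ℕ → Ω → ℝ)
    (hX0 : ∀ ω, X 0 ω = 0) (hY0 : ∀ ω, Y 0 ω = 0)
    (hXrec : ∀ n ω, X (n + 1) ω
        = (1 - η (n + 1)) * X n ω + Real.sqrt (η (n + 1)) * ζ (n + 1) ω)
    (hYrec : ∀ n ω, Y (n + 1) ω = (1 - η (n + 1)) * Y n ω + η (n + 1) * ζ (n + 1) ω)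
    (Vx Vy : ℕ → ℝ) (hVx0 : Vx 0 = 0) (hVy0 : Vy 0 = 0)
    (hVxrec : ∀ n, Vx (n + 1) = (1 - η (n + 1)) ^ 2 * Vx n + η (n + 1))
    (hVyrec : ∀ n, Vy (n + 1) = (1 - η (n + 1)) ^ 2 * Vy n + η (n + 1) ^ 2) :
    (∀ n, Measure.map (X n) P = gaussianReal 0 (Vx n).toNNReal) ∧
    (∀ n, Measure.map (Y n) P = gaussianReal 0 (Vy n).toNNReal) ∧
    Tendsto Vx atTop (nhds (1 / 2)) ∧ Tendsto Vy atTop (nhds 0) := by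
  have hX := law_of_rec P η ζ hζme hζlaw hζind (fun k => Real.sqrt (η k)) X hX0 hXrec Vx hVx0
    (fun n => by rw [hVxrec n, Real.sq_sqrt (hηpos (n + 1)).le])
  have hY := law_of_rec P η ζ hζme hζlaw hζind η Y hY0 hYrec Vy hVy0 hVyrec
  refine ⟨fun n => (hX n).2, fun n => (hY n).2, ?_, ?_⟩
  · -- Vx → 1/2
    have he : Tendsto (fun n => |Vx n - 1 / 2|) atTop (nhds 0) := by
      apply tendsto_rec_zero η hηpos hη1 hlim hdiv _ (fun n => abs_nonneg _)
      intro n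
      have h1 : 0 ≤ 1 - η (n + 1) := by linarith [hη1 (n + 1)]
      have h2 : Vx (n + 1) - 1 / 2
          = (1 - η (n + 1)) ^ 2 * (Vx n - 1 / 2) + η (n + 1) ^ 2 / 2 := by
        rw [hVxrec n]; ring
      calc |Vx (n + 1) - 1 / 2|
          ≤ (1 - η (n + 1)) ^ 2 * |Vx n - 1 / 2| + η (n + 1) ^ 2 / 2 := by
            rw [h2]
            refine (abs_add_le _ _).trans ?_
            rw [abs_mul, abs_of_nonneg (sq_nonneg (1 - η (n + 1))),
              abs_of_nonneg (show (0:ℝ) ≤ η (n + 1) ^ 2 / 2 by positivity)]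
        _ ≤ (1 - η (n + 1)) * |Vx n - 1 / 2| + η (n + 1) ^ 2 := by
            have h3 : 0 ≤ |Vx n - 1 / 2| := abs_nonneg _
            have h4 : (1 - η (n + 1)) ^ 2 ≤ 1 - η (n + 1) := by
              nlinarith [hηpos (n + 1)]
            have h5 := mul_le_mul_of_nonneg_right h4 h3
            have h6 := sq_nonneg (η (n + 1))
            linarith
    rw [tendsto_iff_norm_sub_tendsto_zero]
    simpa [Real.norm_eq_abs] using he
  · -- Vy → 0
    apply tendsto_rec_zero η hηpos hη1 hlim hdiv _ (fun n => (hY n).1)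
    intro n
    have h1 : 0 ≤ 1 - η (n + 1) := by linarith [hη1 (n + 1)]
    rw [hVyrec n]
    have h4 : (1 - η (n + 1)) ^ 2 ≤ 1 - η (n + 1) := by nlinarith [hηpos (n + 1)]
    have h5 := mul_le_mul_of_nonneg_right h4 (hY n).1
    linarith
end

section
/- Assumption constants for online PCA (Proposition 6.3): Let M be a d×d positive semidefinite matrix and x ~ N(0, M). Then there exists an absolute constant c > 0 such that: (i) E[‖x xᵀ − M‖_F⁴] ≤ c tr(M)⁴; and (ii) for every Γ ≥ 1 and every X ∈ ℝ^{d×r} with ‖XXᵀ‖_F ≤ Γ and ‖M‖_F ≤ Γ, the gradient noise ξ = (x xᵀ − M)X of the population loss F(X) = (1/2)‖XXᵀ − M‖_F² satisfies E[⟨ξ, ∇²F(X) ξ⟩] ≤ c Γ² tr(M)². -/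
open MeasureTheory ProbabilityTheory Real Filter Matrix

/-- Frobenius norm of a real matrix. -/
noncomputable def frob {m n : ℕ} (A : Matrix (Fin m) (Fin n) ℝ) : ℝ :=
  Real.sqrt (∑ i, ∑ j, A i j ^ 2)

/-- Trace (Frobenius) inner product of two real matrices. -/
def minner {m n : ℕ} (A B : Matrix (Fin m) (Fin n) ℝ) : ℝ :=
  ∑ i, ∑ j, A i j * B i j

open scoped NNReal ENNReal

set_option maxHeartbeats 1000000

namespace PCAaux


variable {m n p : ℕ}

lemma minner_self_nonneg (A : Matrix (Fin m) (Fin n) ℝ) : 0 ≤ minner A A :=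
  Finset.sum_nonneg fun _ _ => Finset.sum_nonneg fun _ _ => mul_self_nonneg _

lemma frob_nonneg (A : Matrix (Fin m) (Fin n) ℝ) : 0 ≤ frob A := Real.sqrt_nonneg _

lemma frob_eq_sqrt_minner (A : Matrix (Fin m) (Fin n) ℝ) :
    frob A = Real.sqrt (minner A A) := by
  unfold frob minner; congr 1; simp [sq]

lemma frob_sq (A : Matrix (Fin m) (Fin n) ℝ) : frob A ^ 2 = minner A A := by
  rw [frob_eq_sqrt_minner, Real.sq_sqrt (minner_self_nonneg A)]

lemma minner_eq_trace (A B : Matrix (Fin m) (Fin n) ℝ) :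
    minner A B = (Aᵀ * B).trace := by
  unfold minner
  rw [Matrix.trace]
  simp only [Matrix.diag, Matrix.mul_apply, Matrix.transpose_apply]
  exact Finset.sum_comm

lemma minner_comm (A B : Matrix (Fin m) (Fin n) ℝ) : minner A B = minner B A := by
  unfold minner; congr 1; ext i; congr 1; ext j; ring

lemma abs_minner_le (A B : Matrix (Fin m) (Fin n) ℝ) :
    |minner A B| ≤ frob A * frob B := by
  have h1 : minner A B = ∑ q : Fin m × Fin n, A q.1 q.2 * B q.1 q.2 := by
    unfold minner; rw [Fintype.sum_prod_type]
  have h2 : minner A A = ∑ q : Fin m × Fin n, (A q.1 q.2) ^ 2 := by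
    unfold minner; rw [Fintype.sum_prod_type]; simp [sq]
  have h3 : minner B B = ∑ q : Fin m × Fin n, (B q.1 q.2) ^ 2 := by
    unfold minner; rw [Fintype.sum_prod_type]; simp [sq]
  have hcs := Finset.sum_mul_sq_le_sq_mul_sq Finset.univ
    (fun q : Fin m × Fin n => A q.1 q.2) (fun q => B q.1 q.2)
  have habs : |minner A B| = Real.sqrt ((minner A B) ^ 2) := (Real.sqrt_sq_eq_abs _).symm
  rw [habs, frob_eq_sqrt_minner, frob_eq_sqrt_minner, ← Real.sqrt_mul (minner_self_nonneg A)]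
  apply Real.sqrt_le_sqrt
  rw [h1, h2, h3]
  exact hcs

lemma minner_le (A B : Matrix (Fin m) (Fin n) ℝ) : minner A B ≤ frob A * frob B :=
  (le_abs_self _).trans (abs_minner_le A B)

lemma neg_minner_le (A B : Matrix (Fin m) (Fin n) ℝ) : -minner A B ≤ frob A * frob B :=
  (neg_le_abs _).trans (abs_minner_le A B)

lemma frob_transpose (A : Matrix (Fin m) (Fin n) ℝ) : frob Aᵀ = frob A := by
  unfold frob
  congr 1
  rw [Finset.sum_comm]
  simp [Matrix.transpose_apply]

lemma frob_mul_le (A : Matrix (Fin m) (Fin n) ℝ) (B : Matrix (Fin n) (Fin p) ℝ) :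
    frob (A * B) ≤ frob A * frob B := by
  rw [frob_eq_sqrt_minner, frob_eq_sqrt_minner, frob_eq_sqrt_minner,
    ← Real.sqrt_mul (minner_self_nonneg A)]
  apply Real.sqrt_le_sqrt
  unfold minner
  simp only [Matrix.mul_apply, ← pow_two]
  calc ∑ i, ∑ j, (∑ k, A i k * B k j) ^ 2
      ≤ ∑ i, ∑ j, (∑ k, A i k ^ 2) * (∑ k, B k j ^ 2) := by
        apply Finset.sum_le_sum; intro i _
        apply Finset.sum_le_sum; intro j _
        exact Finset.sum_mul_sq_le_sq_mul_sq _ _ _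
    _ = (∑ i, ∑ k, A i k ^ 2) * (∑ j, ∑ k, B k j ^ 2) :=
        (Finset.sum_mul_sum _ _ _ _).symm
    _ = (∑ i, ∑ k, A i k ^ 2) * (∑ k, ∑ j, B k j ^ 2) := by
        congr 1
        exact Finset.sum_comm

lemma minner_add_add (A B : Matrix (Fin m) (Fin n) ℝ) :
    minner (A + B) (A + B) = minner A A + 2 * minner A B + minner B B := by
  unfold minner
  simp only [Matrix.add_apply]
  have h : ∀ i j, (A i j + B i j) * (A i j + B i j)
      = A i j * A i j + 2 * (A i j * B i j) + B i j * B i j := fun i j => by ring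
  simp_rw [h, Finset.sum_add_distrib, ← Finset.mul_sum]

lemma frob_add_le (A B : Matrix (Fin m) (Fin n) ℝ) : frob (A + B) ≤ frob A + frob B := by
  rw [frob_eq_sqrt_minner]
  have h : minner (A + B) (A + B) ≤ (frob A + frob B) ^ 2 := by
    rw [minner_add_add]
    have := minner_le A B
    nlinarith [frob_sq A, frob_sq B, frob_nonneg A, frob_nonneg B]
  calc Real.sqrt (minner (A + B) (A + B)) ≤ Real.sqrt ((frob A + frob B) ^ 2) :=
        Real.sqrt_le_sqrt h
    _ = frob A + frob B := by
        have h1 := frob_nonneg A; have h2 := frob_nonneg B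
        rw [Real.sqrt_sq (by linarith)]

lemma frob_neg (A : Matrix (Fin m) (Fin n) ℝ) : frob (-A) = frob A := by
  have h : ∀ i j, (-A) i j ^ 2 = A i j ^ 2 := fun i j => neg_sq (A i j)
  unfold frob
  simp_rw [h]

lemma frob_sub_le (A B : Matrix (Fin m) (Fin n) ℝ) : frob (A - B) ≤ frob A + frob B := by
  rw [sub_eq_add_neg]
  calc frob (A + -B) ≤ frob A + frob (-B) := frob_add_le _ _
    _ = frob A + frob B := by rw [frob_neg]

lemma frob_mul_sq (A : Matrix (Fin m) (Fin n) ℝ) (B : Matrix (Fin n) (Fin p) ℝ) :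
    frob (A * B) ^ 2 = minner (Aᵀ * A) (B * Bᵀ) := by
  have e1 : (A * B)ᵀ = Bᵀ * Aᵀ := Matrix.transpose_mul _ _
  have e2 : (Aᵀ * A)ᵀ = Aᵀ * A := by rw [Matrix.transpose_mul, Matrix.transpose_transpose]
  rw [frob_sq, minner_eq_trace, minner_eq_trace, e1, e2]
  rw [show Bᵀ * Aᵀ * (A * B) = Bᵀ * (Aᵀ * A * B) by
    rw [Matrix.mul_assoc, Matrix.mul_assoc]]
  rw [Matrix.trace_mul_comm]
  rw [Matrix.mul_assoc]

lemma frob_transpose_mul_self (A : Matrix (Fin m) (Fin n) ℝ) :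
    frob (Aᵀ * A) = frob (A * Aᵀ) := by
  have h : minner (Aᵀ * A) (Aᵀ * A) = minner (A * Aᵀ) (A * Aᵀ) := by
    have e2 : (Aᵀ * A)ᵀ = Aᵀ * A := by rw [Matrix.transpose_mul, Matrix.transpose_transpose]
    have e3 : (A * Aᵀ)ᵀ = A * Aᵀ := by rw [Matrix.transpose_mul, Matrix.transpose_transpose]
    rw [minner_eq_trace, minner_eq_trace, e2, e3]
    rw [show Aᵀ * A * (Aᵀ * A) = Aᵀ * (A * Aᵀ * A) by
      rw [Matrix.mul_assoc, Matrix.mul_assoc], Matrix.trace_mul_comm]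
    simp [Matrix.mul_assoc]
  rw [frob_eq_sqrt_minner, frob_eq_sqrt_minner, h]

lemma frob_vecMulVec_self (x : Fin m → ℝ) :
    frob (Matrix.vecMulVec x x) = ∑ i, x i ^ 2 := by
  unfold frob
  have h : ∀ i j : Fin m, Matrix.vecMulVec x x i j ^ 2 = x i ^ 2 * x j ^ 2 := by
    intro i j; rw [Matrix.vecMulVec_apply]; ring
  simp_rw [h]
  rw [show (∑ i, ∑ j, x i ^ 2 * x j ^ 2) = (∑ i, x i ^ 2) * (∑ j, x j ^ 2) from (Finset.sum_mul_sum _ _ _ _).symm]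
  rw [← pow_two, Real.sqrt_sq (Finset.sum_nonneg fun i _ => sq_nonneg _)]


lemma trace_nonneg_of_psd {d : ℕ} {M : Matrix (Fin d) (Fin d) ℝ} (hM : M.PosSemidef) :
    0 ≤ M.trace := by
  obtain ⟨B, hB⟩ := (by open scoped MatrixOrder in exact CStarAlgebra.nonneg_iff_eq_star_mul_self.mp hM.nonneg : ∃ B : Matrix (Fin d) (Fin d) ℝ, M = Bᴴ * B)
  have : M.trace = minner B B := by
    rw [hB, minner_eq_trace]
    simp
  rw [this]
  exact minner_self_nonneg B

lemma frob_le_trace_of_psd {d : ℕ} {M : Matrix (Fin d) (Fin d) ℝ} (hM : M.PosSemidef) :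
    frob M ≤ M.trace := by
  obtain ⟨B, hB⟩ := (by open scoped MatrixOrder in exact CStarAlgebra.nonneg_iff_eq_star_mul_self.mp hM.nonneg : ∃ B : Matrix (Fin d) (Fin d) ℝ, M = Bᴴ * B)
  have hBt : (Bᴴ : Matrix (Fin d) (Fin d) ℝ) = Bᵀ := by
    simp
  have htr : M.trace = frob B ^ 2 := by
    rw [hB, hBt, ← minner_eq_trace, frob_sq]
  have : frob M ≤ frob B ^ 2 := by
    rw [hB, hBt]
    calc frob (Bᵀ * B) ≤ frob Bᵀ * frob B := frob_mul_le _ _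
      _ = frob B ^ 2 := by rw [frob_transpose, pow_two]
  rw [htr]; exact this

lemma diag_nonneg_of_psd {d : ℕ} {M : Matrix (Fin d) (Fin d) ℝ} (hM : M.PosSemidef) (i : Fin d) :
    0 ≤ M i i := by
  exact hM.diag_nonneg

lemma single_dot {d : ℕ} (M : Matrix (Fin d) (Fin d) ℝ) (i : Fin d) :
    (Pi.single i 1 : Fin d → ℝ) ⬝ᵥ M.mulVec (Pi.single i 1) = M i i := by
  simp [dotProduct, Matrix.mulVec, Pi.single_apply, Finset.sum_ite_eq]

lemma hess_pointwise {d r : ℕ} (W M : Matrix (Fin d) (Fin d) ℝ) (X : Matrix (Fin d) (Fin r) ℝ)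
    {Γ : ℝ} (hΓ1 : 1 ≤ Γ) (hX : frob (X * Xᵀ) ≤ Γ) (hM : frob M ≤ Γ) :
    |1 / 2 * frob (X * (W * X)ᵀ + W * X * Xᵀ) ^ 2
      + minner (X * Xᵀ) (W * X * (W * X)ᵀ)
      - minner M (W * X * (W * X)ᵀ)| ≤ 4 * Γ ^ 2 * frob W ^ 2 := by
  have hΓ0 : (0:ℝ) ≤ Γ := le_trans zero_le_one hΓ1
  set Z := W * X with hZ
  have hZsq : frob Z ^ 2 ≤ Γ * frob W ^ 2 := by
    rw [hZ, frob_mul_sq]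
    calc minner (Wᵀ * W) (X * Xᵀ) ≤ frob (Wᵀ * W) * frob (X * Xᵀ) := minner_le _ _
      _ ≤ (frob Wᵀ * frob W) * Γ :=
          mul_le_mul (frob_mul_le _ _) hX (frob_nonneg _)
            (mul_nonneg (frob_nonneg _) (frob_nonneg _))
      _ = Γ * frob W ^ 2 := by rw [frob_transpose, ← pow_two]; ring
  have h1 : frob (X * Zᵀ) ^ 2 ≤ Γ * frob Z ^ 2 := by
    rw [frob_mul_sq, Matrix.transpose_transpose]
    calc minner (Xᵀ * X) (Zᵀ * Z) ≤ frob (Xᵀ * X) * frob (Zᵀ * Z) := minner_le _ _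
      _ ≤ frob (X * Xᵀ) * (frob Zᵀ * frob Z) := by
          rw [frob_transpose_mul_self]
          exact mul_le_mul_of_nonneg_left (frob_mul_le _ _) (frob_nonneg _)
      _ ≤ Γ * frob Z ^ 2 := by
          rw [frob_transpose, ← pow_two]
          exact mul_le_mul_of_nonneg_right hX (sq_nonneg _)
  have h2 : frob (Z * Xᵀ) ^ 2 ≤ Γ * frob Z ^ 2 := by
    rw [frob_mul_sq, Matrix.transpose_transpose]
    calc minner (Zᵀ * Z) (Xᵀ * X) ≤ frob (Zᵀ * Z) * frob (Xᵀ * X) := minner_le _ _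
      _ = frob (Zᵀ * Z) * frob (X * Xᵀ) := by rw [frob_transpose_mul_self X]
      _ ≤ (frob Zᵀ * frob Z) * Γ :=
          mul_le_mul (frob_mul_le _ _) hX (frob_nonneg _)
            (mul_nonneg (frob_nonneg _) (frob_nonneg _))
      _ = Γ * frob Z ^ 2 := by rw [frob_transpose, ← pow_two]; ring
  have hZZ : frob (Z * Zᵀ) ≤ frob Z ^ 2 := by
    calc frob (Z * Zᵀ) ≤ frob Z * frob Zᵀ := frob_mul_le _ _
      _ = frob Z ^ 2 := by rw [frob_transpose, ← pow_two]
  have ht1 : frob (X * Zᵀ + Z * Xᵀ) ^ 2 ≤ 4 * (Γ * frob Z ^ 2) := by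
    have e := frob_add_le (X * Zᵀ) (Z * Xᵀ)
    nlinarith [frob_nonneg (X * Zᵀ), frob_nonneg (Z * Xᵀ), frob_nonneg (X * Zᵀ + Z * Xᵀ), h1, h2,
      sq_nonneg (frob (X * Zᵀ) - frob (Z * Xᵀ)), sq_nonneg (frob (X * Zᵀ) + frob (Z * Xᵀ))]
  have ht2 : |minner (X * Xᵀ) (Z * Zᵀ)| ≤ Γ * frob Z ^ 2 := by
    calc |minner (X * Xᵀ) (Z * Zᵀ)| ≤ frob (X * Xᵀ) * frob (Z * Zᵀ) := abs_minner_le _ _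
      _ ≤ Γ * frob Z ^ 2 := by
          apply mul_le_mul hX hZZ (frob_nonneg _) hΓ0
  have ht3 : |minner M (Z * Zᵀ)| ≤ Γ * frob Z ^ 2 := by
    calc |minner M (Z * Zᵀ)| ≤ frob M * frob (Z * Zᵀ) := abs_minner_le _ _
      _ ≤ Γ * frob Z ^ 2 := by
          apply mul_le_mul hM hZZ (frob_nonneg _) hΓ0
  have habs : |1 / 2 * frob (X * Zᵀ + Z * Xᵀ) ^ 2
      + minner (X * Xᵀ) (Z * Zᵀ) - minner M (Z * Zᵀ)| ≤ 4 * (Γ * frob Z ^ 2) := by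
    have h' : |1 / 2 * frob (X * Zᵀ + Z * Xᵀ) ^ 2 + minner (X * Xᵀ) (Z * Zᵀ)
        - minner M (Z * Zᵀ)|
        ≤ |1 / 2 * frob (X * Zᵀ + Z * Xᵀ) ^ 2| + |minner (X * Xᵀ) (Z * Zᵀ)|
          + |minner M (Z * Zᵀ)| :=
      (abs_sub _ _).trans (by gcongr; exact abs_add_le _ _)
    have h0 : |1 / 2 * frob (X * Zᵀ + Z * Xᵀ) ^ 2| = 1 / 2 * frob (X * Zᵀ + Z * Xᵀ) ^ 2 :=
      abs_of_nonneg (by positivity)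
    rw [h0] at h'
    nlinarith [ht2, ht3]
  calc |1 / 2 * frob (X * Zᵀ + Z * Xᵀ) ^ 2 + minner (X * Xᵀ) (Z * Zᵀ) - minner M (Z * Zᵀ)|
      ≤ 4 * (Γ * frob Z ^ 2) := habs
    _ ≤ 4 * Γ ^ 2 * frob W ^ 2 := by nlinarith [hZsq]



lemma gaussian_exp (v : ℝ≥0) (t : ℝ) :
    Integrable (fun y : ℝ => Real.exp (t * y)) (gaussianReal 0 v) ∧
    ∫ y : ℝ, Real.exp (t * y) ∂(gaussianReal 0 v) = Real.exp ((v : ℝ) * t ^ 2 / 2) := by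
  by_cases hv : v = 0
  · subst hv
    rw [gaussianReal_zero_var]
    have hm : Measurable fun y : ℝ => Real.exp (t * y) := (measurable_const_mul t).exp
    refine ⟨(integrable_const (Real.exp (t * 0))).congr ((ae_eq_dirac' hm).symm), ?_⟩
    rw [integral_dirac]
    simp
  · have hv0 : (0:ℝ) < (v : ℝ) := by
      exact_mod_cast pos_iff_ne_zero.mpr hv
    have key : ∀ y : ℝ, Real.exp (t * y) * gaussianPDFReal 0 v y
        = Real.exp ((v : ℝ) * t ^ 2 / 2) * gaussianPDFReal (t * v) v y := by
      intro y
      unfold gaussianPDFReal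
      have hcomb : ∀ a b : ℝ, Real.exp a * ((Real.sqrt (2 * π * v))⁻¹ * Real.exp b)
          = (Real.sqrt (2 * π * v))⁻¹ * Real.exp (a + b) := by
        intro a b; rw [Real.exp_add]; ring
      rw [hcomb, hcomb]
      congr 1
      field_simp
      ring
    have hpdfmeas : Measurable fun y => Real.toNNReal (gaussianPDFReal 0 v y) :=
      (measurable_gaussianPDFReal 0 v).real_toNNReal
    have hpdf_eq : gaussianPDF 0 v
        = fun y => ((Real.toNNReal (gaussianPDFReal 0 v y) : ℝ≥0) : ℝ≥0∞) := rfl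
    rw [gaussianReal_of_var_ne_zero 0 hv]
    have hsmul : ∀ (a : ℝ), 0 ≤ a → ∀ x : ℝ, (Real.toNNReal a) • x = a * x := by
      intro a ha x
      rw [NNReal.smul_def, Real.coe_toNNReal _ ha, smul_eq_mul]
    constructor
    · rw [integrable_withDensity_iff (measurable_gaussianPDF 0 v)
        (ae_of_all _ fun y => ENNReal.ofReal_lt_top)]
      have : (fun y => Real.exp (t * y) * ((gaussianPDF 0 v y).toReal))
          = fun y => Real.exp ((v : ℝ) * t ^ 2 / 2) * gaussianPDFReal (t * v) v y := by
        funext y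
        rw [gaussianPDF, ENNReal.toReal_ofReal (gaussianPDFReal_nonneg 0 v y)]
        exact key y
      rw [this]
      exact (integrable_gaussianPDFReal (t * v) v).const_mul _
    · rw [hpdf_eq, integral_withDensity_eq_integral_smul hpdfmeas]
      have : (fun y => Real.toNNReal (gaussianPDFReal 0 v y) • Real.exp (t * y))
          = fun y => Real.exp ((v : ℝ) * t ^ 2 / 2) * gaussianPDFReal (t * v) v y := by
        funext y
        rw [hsmul _ (gaussianPDFReal_nonneg 0 v y), mul_comm (gaussianPDFReal 0 v y) _]
        exact key y
      rw [this, integral_const_mul, integral_gaussianPDFReal_eq_one _ hv, mul_one]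

lemma exp_half_le_three : Real.exp (1/2 : ℝ) ≤ 3 := by
  have h1 : Real.exp (1/2 : ℝ) ≤ Real.exp 1 := Real.exp_le_exp.mpr (by norm_num)
  have h2 := Real.exp_one_lt_d9
  linarith

lemma gaussian_even_moment (k : ℕ) (v : ℝ≥0) :
    Integrable (fun y : ℝ => y ^ (2*k)) (gaussianReal 0 v) ∧
    ∫ y : ℝ, y ^ (2*k) ∂(gaussianReal 0 v) ≤ 6 * (Nat.factorial (2*k)) * (v:ℝ)^k := by
  have hfmeas : Measurable fun y : ℝ => y ^ (2*k) := by fun_prop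
  by_cases hv : v = 0
  · subst hv
    rw [gaussianReal_zero_var]
    refine ⟨(integrable_const ((0:ℝ) ^ (2*k))).congr ((ae_eq_dirac' hfmeas).symm), ?_⟩
    rw [integral_dirac]
    rcases Nat.eq_zero_or_pos k with hk | hk
    · subst hk; norm_num
    · rw [zero_pow (by omega)]
      positivity
  · have hv0 : (0:ℝ) < (v : ℝ) := by exact_mod_cast pos_iff_ne_zero.mpr hv
    set t : ℝ := (Real.sqrt v)⁻¹ with htdef
    have ht : 0 < t := by positivity
    have htv : (v:ℝ) * t ^ 2 = 1 := by
      rw [htdef, inv_pow, Real.sq_sqrt (le_of_lt hv0)]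
      field_simp
    have hpt : ∀ y : ℝ, y ^ (2*k)
        ≤ (Nat.factorial (2*k)) * (v:ℝ)^k * (Real.exp (t*y) + Real.exp (-(t*y))) := by
      intro y
      have hfact : |t*y| ^ (2*k) ≤ (Nat.factorial (2*k)) * Real.exp |t*y| := by
        have hsum := Real.sum_le_exp_of_nonneg (abs_nonneg (t*y)) (2*k+1)
        have hsingle : |t*y| ^ (2*k) / (Nat.factorial (2*k))
            ≤ ∑ i ∈ Finset.range (2*k+1), |t*y| ^ i / (Nat.factorial i) := by
          apply Finset.single_le_sum (f := fun i => |t*y| ^ i / (Nat.factorial i))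
          · intro i _; positivity
          · simp
        have hfac0 : (0:ℝ) < (Nat.factorial (2*k)) := by positivity
        rw [div_le_iff₀ hfac0] at hsingle
        calc |t*y| ^ (2*k) ≤ Real.exp |t*y| * (Nat.factorial (2*k)) :=
              hsingle.trans (mul_le_mul_of_nonneg_right hsum (le_of_lt hfac0))
          _ = (Nat.factorial (2*k)) * Real.exp |t*y| := by ring
      have hexp : Real.exp |t*y| ≤ Real.exp (t*y) + Real.exp (-(t*y)) := by
        rcases abs_cases (t*y) with ⟨h, _⟩ | ⟨h, _⟩ <;> rw [h] <;>
          [linarith [Real.exp_pos (-(t*y))]; linarith [Real.exp_pos (t*y)]]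
      have hy : (v:ℝ)^k * |t*y| ^ (2*k) = y ^ (2*k) := by
        rw [pow_mul, pow_mul, sq_abs, ← mul_pow]
        congr 1
        rw [mul_pow, ← mul_assoc, htv, one_mul]
      calc y ^ (2*k) = (v:ℝ)^k * |t*y| ^ (2*k) := hy.symm
        _ ≤ (v:ℝ)^k * ((Nat.factorial (2*k)) * (Real.exp (t*y) + Real.exp (-(t*y)))) := by
            apply mul_le_mul_of_nonneg_left _ (by positivity)
            exact hfact.trans (mul_le_mul_of_nonneg_left hexp (by positivity))
        _ = (Nat.factorial (2*k)) * (v:ℝ)^k * (Real.exp (t*y) + Real.exp (-(t*y))) := by ring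
    have hexp1 := gaussian_exp v t
    have hexp2 : Integrable (fun y : ℝ => Real.exp (-(t*y))) (gaussianReal 0 v) ∧
        ∫ y : ℝ, Real.exp (-(t*y)) ∂(gaussianReal 0 v) = Real.exp ((v : ℝ) * t ^ 2 / 2) := by
      have h1 := (gaussian_exp v (-t)).1
      have h2 := (gaussian_exp v (-t)).2
      simp only [neg_mul] at h1 h2
      rw [neg_sq] at h2
      exact ⟨h1, h2⟩
    have hgint : Integrable (fun y : ℝ =>
        (Nat.factorial (2*k)) * (v:ℝ)^k * (Real.exp (t*y) + Real.exp (-(t*y))))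
        (gaussianReal 0 v) := ((hexp1.1.add hexp2.1).const_mul _)
    have hfint : Integrable (fun y : ℝ => y ^ (2*k)) (gaussianReal 0 v) := by
      apply hgint.mono' hfmeas.aestronglyMeasurable
      apply ae_of_all
      intro y
      rw [Real.norm_eq_abs, abs_pow, Even.pow_abs (even_two_mul k)]
      exact hpt y
    refine ⟨hfint, ?_⟩
    calc ∫ y : ℝ, y ^ (2*k) ∂(gaussianReal 0 v)
        ≤ ∫ y : ℝ, (Nat.factorial (2*k)) * (v:ℝ)^k
            * (Real.exp (t*y) + Real.exp (-(t*y))) ∂(gaussianReal 0 v) :=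
          integral_mono hfint hgint hpt
      _ = (Nat.factorial (2*k)) * (v:ℝ)^k * (2 * Real.exp ((v : ℝ) * t ^ 2 / 2)) := by
          rw [integral_const_mul, integral_add hexp1.1 hexp2.1, hexp1.2, hexp2.2]
          ring
      _ ≤ 6 * (Nat.factorial (2*k)) * (v:ℝ)^k := by
          rw [htv]
          have h26 : 2 * Real.exp ((1:ℝ)/2) ≤ 6 := by
            have := exp_half_le_three; linarith
          have hnn : (0:ℝ) ≤ (Nat.factorial (2*k)) * (v:ℝ)^k := by positivity
          calc (Nat.factorial (2*k) : ℝ) * (v:ℝ)^k * (2 * Real.exp ((1:ℝ)/2))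
              ≤ (Nat.factorial (2*k)) * (v:ℝ)^k * 6 := mul_le_mul_of_nonneg_left h26 hnn
            _ = 6 * (Nat.factorial (2*k)) * (v:ℝ)^k := by ring



variable {Ω : Type} [MeasurableSpace Ω] {P : Measure Ω}

lemma integral_CS {f g : Ω → ℝ} (hfm : Measurable f) (hgm : Measurable g)
    (hf0 : ∀ ω, 0 ≤ f ω) (hg0 : ∀ ω, 0 ≤ g ω)
    (hf2 : Integrable (fun ω => f ω ^ 2) P) (hg2 : Integrable (fun ω => g ω ^ 2) P) :
    ∫ ω, f ω * g ω ∂P ≤ Real.sqrt (∫ ω, f ω ^ 2 ∂P) * Real.sqrt (∫ ω, g ω ^ 2 ∂P) := by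
  have hpq : Real.HolderConjugate 2 2 := Real.HolderConjugate.two_two
  have h2 : (ENNReal.ofReal (2:ℝ)) = 2 := by
    rw [ENNReal.ofReal_ofNat]
  have hfL : MemLp f (ENNReal.ofReal (2:ℝ)) P := by
    rw [h2]
    exact (memLp_two_iff_integrable_sq hfm.aestronglyMeasurable).mpr hf2
  have hgL : MemLp g (ENNReal.ofReal (2:ℝ)) P := by
    rw [h2]
    exact (memLp_two_iff_integrable_sq hgm.aestronglyMeasurable).mpr hg2
  have h := integral_mul_le_Lp_mul_Lq_of_nonneg hpq (ae_of_all _ hf0) (ae_of_all _ hg0) hfL hgL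
  have hr : ∀ x : ℝ, x ^ (2:ℝ) = x ^ 2 := fun x => by
    rw [show (2:ℝ) = ((2:ℕ):ℝ) by norm_num, Real.rpow_natCast]
  simp only [hr] at h
  rw [Real.sqrt_eq_rpow, Real.sqrt_eq_rpow]
  exact h

lemma amgm2 {a b : ℝ} (ha : 0 ≤ a) (hb : 0 ≤ b) : a * b ≤ (a ^ 2 + b ^ 2) / 2 := by
  nlinarith [sq_nonneg (a - b)]

lemma amgm4 {a b c d : ℝ} (ha : 0 ≤ a) (hb : 0 ≤ b) (hc : 0 ≤ c) (hd : 0 ≤ d) :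
    a * b * c * d ≤ (a ^ 4 + b ^ 4 + c ^ 4 + d ^ 4) / 4 := by
  nlinarith [sq_nonneg (a*b - c*d), sq_nonneg (a^2 - b^2), sq_nonneg (c^2 - d^2),
    mul_nonneg ha hb, mul_nonneg hc hd, sq_nonneg (a*b + c*d)]

lemma add_pow_four_le {a b : ℝ} (ha : 0 ≤ a) (hb : 0 ≤ b) :
    (a + b) ^ 4 ≤ 8 * (a ^ 4 + b ^ 4) := by
  nlinarith [sq_nonneg (a - b), sq_nonneg (a + b), sq_nonneg (a^2 - b^2), mul_nonneg ha hb,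
    mul_nonneg (mul_nonneg ha ha) hb, mul_nonneg (mul_nonneg ha hb) hb]

lemma sum_pow_two {ι : Type*} (s : Finset ι) (f : ι → ℝ) :
    (∑ i ∈ s, f i) ^ 2 = ∑ i ∈ s, ∑ j ∈ s, f i * f j := by
  rw [pow_two, Finset.sum_mul_sum]

lemma sum_pow_four {ι : Type*} (s : Finset ι) (f : ι → ℝ) :
    (∑ i ∈ s, f i) ^ 4 = ∑ i ∈ s, ∑ j ∈ s, ∑ k ∈ s, ∑ l ∈ s, f i * f j * (f k * f l) := by
  have h2 := sum_pow_two s f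
  calc (∑ i ∈ s, f i) ^ 4 = ((∑ i ∈ s, f i) ^ 2) * ((∑ i ∈ s, f i) ^ 2) := by ring
    _ = (∑ i ∈ s, ∑ j ∈ s, f i * f j) * (∑ k ∈ s, ∑ l ∈ s, f k * f l) := by rw [h2]
    _ = ∑ i ∈ s, ∑ j ∈ s, ∑ k ∈ s, ∑ l ∈ s, f i * f j * (f k * f l) := by
        rw [Finset.sum_mul]
        apply Finset.sum_congr rfl; intro i _
        rw [Finset.sum_mul]
        apply Finset.sum_congr rfl; intro j _
        rw [Finset.mul_sum]
        apply Finset.sum_congr rfl; intro k _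
        rw [Finset.mul_sum]

lemma sum_sq_moments [IsProbabilityMeasure P] {d : ℕ} (g : Fin d → Ω → ℝ) (m : Fin d → ℝ)
    (hm : ∀ i, 0 ≤ m i) (hgm : ∀ i, Measurable (g i))
    (h4 : ∀ i, Integrable (fun ω => g i ω ^ 4) P)
    (h4b : ∀ i, ∫ ω, g i ω ^ 4 ∂P ≤ 144 * m i ^ 2)
    (h8 : ∀ i, Integrable (fun ω => g i ω ^ 8) P)
    (h8b : ∀ i, ∫ ω, g i ω ^ 8 ∂P ≤ 241920 * m i ^ 4) :
    (Integrable (fun ω => (∑ i, g i ω ^ 2) ^ 2) P ∧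
      ∫ ω, (∑ i, g i ω ^ 2) ^ 2 ∂P ≤ 144 * (∑ i, m i) ^ 2) ∧
    (Integrable (fun ω => (∑ i, g i ω ^ 2) ^ 4) P ∧
      ∫ ω, (∑ i, g i ω ^ 2) ^ 4 ∂P ≤ 241920 * (∑ i, m i) ^ 4) := by
  -- basic integrabilities
  have hint44 : ∀ i j : Fin d, Integrable (fun ω => g i ω ^ 4 * g j ω ^ 4) P := by
    intro i j
    apply (((h8 i).add (h8 j)).div_const 2).mono'
      ((((hgm i).pow_const 4).mul ((hgm j).pow_const 4)).aestronglyMeasurable)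
    apply ae_of_all
    intro ω
    rw [Real.norm_eq_abs, abs_of_nonneg (by simp only [Pi.mul_apply]; positivity)]
    calc g i ω ^ 4 * g j ω ^ 4 ≤ ((g i ω ^ 4) ^ 2 + (g j ω ^ 4) ^ 2) / 2 :=
          amgm2 (by positivity) (by positivity)
      _ = (g i ω ^ 8 + g j ω ^ 8) / 2 := by ring
  have hint22 : ∀ i j : Fin d, Integrable (fun ω => g i ω ^ 2 * g j ω ^ 2) P := by
    intro i j
    apply (((h4 i).add (h4 j)).div_const 2).mono'
      ((((hgm i).pow_const 2).mul ((hgm j).pow_const 2)).aestronglyMeasurable)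
    apply ae_of_all
    intro ω
    rw [Real.norm_eq_abs, abs_of_nonneg (by simp only [Pi.mul_apply]; positivity)]
    calc g i ω ^ 2 * g j ω ^ 2 ≤ ((g i ω ^ 2) ^ 2 + (g j ω ^ 2) ^ 2) / 2 :=
          amgm2 (by positivity) (by positivity)
      _ = (g i ω ^ 4 + g j ω ^ 4) / 2 := by ring
  have hintq : ∀ i j k l : Fin d,
      Integrable (fun ω => g i ω ^ 2 * g j ω ^ 2 * (g k ω ^ 2 * g l ω ^ 2)) P := by
    intro i j k l
    apply (((((h8 i).add (h8 j)).add (h8 k)).add (h8 l)).div_const 4).mono'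
      (((((hgm i).pow_const 2).mul ((hgm j).pow_const 2)).mul
        (((hgm k).pow_const 2).mul ((hgm l).pow_const 2))).aestronglyMeasurable)
    apply ae_of_all
    intro ω
    rw [Real.norm_eq_abs, abs_of_nonneg (by simp only [Pi.mul_apply]; positivity)]
    calc g i ω ^ 2 * g j ω ^ 2 * (g k ω ^ 2 * g l ω ^ 2)
        = g i ω ^ 2 * g j ω ^ 2 * g k ω ^ 2 * g l ω ^ 2 := by ring
      _ ≤ ((g i ω ^ 2) ^ 4 + (g j ω ^ 2) ^ 4 + (g k ω ^ 2) ^ 4 + (g l ω ^ 2) ^ 4) / 4 :=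
          amgm4 (by positivity) (by positivity) (by positivity) (by positivity)
      _ = (g i ω ^ 8 + g j ω ^ 8 + g k ω ^ 8 + g l ω ^ 8) / 4 := by ring
  -- second-moment bounds on pairs
  have hpair : ∀ i j : Fin d, ∫ ω, g i ω ^ 2 * g j ω ^ 2 ∂P ≤ 144 * (m i * m j) := by
    intro i j
    have hsq : ∀ (i : Fin d) (ω : Ω), (g i ω ^ 2) ^ 2 = g i ω ^ 4 := fun i ω => by ring
    have h := integral_CS (P := P) ((hgm i).pow_const 2) ((hgm j).pow_const 2)
      (fun ω => by positivity) (fun ω => by positivity)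
      (by simpa only [hsq] using h4 i) (by simpa only [hsq] using h4 j)
    simp only [hsq] at h
    refine h.trans ?_
    have hb : ∀ i : Fin d, Real.sqrt (∫ ω, g i ω ^ 4 ∂P) ≤ 12 * m i := by
      intro i
      refine (Real.sqrt_le_sqrt (h4b i)).trans ?_
      rw [show (144:ℝ) * m i ^ 2 = (12 * m i) ^ 2 by ring,
        Real.sqrt_sq (by have := hm i; positivity)]
    calc Real.sqrt (∫ ω, g i ω ^ 4 ∂P) * Real.sqrt (∫ ω, g j ω ^ 4 ∂P)
        ≤ (12 * m i) * (12 * m j) := by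
          apply mul_le_mul (hb i) (hb j) (Real.sqrt_nonneg _)
          have := hm i; positivity
      _ = 144 * (m i * m j) := by ring
  -- fourth-moment bounds on pairs (of 4th powers)
  have hpair4 : ∀ i j : Fin d, ∫ ω, g i ω ^ 4 * g j ω ^ 4 ∂P ≤ 241920 * (m i ^ 2 * m j ^ 2) := by
    intro i j
    have hsq : ∀ (i : Fin d) (ω : Ω), (g i ω ^ 4) ^ 2 = g i ω ^ 8 := fun i ω => by ring
    have h := integral_CS (P := P) ((hgm i).pow_const 4) ((hgm j).pow_const 4)
      (fun ω => by positivity) (fun ω => by positivity)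
      (by simpa only [hsq] using h8 i) (by simpa only [hsq] using h8 j)
    simp only [hsq] at h
    refine h.trans ?_
    have hb : ∀ i : Fin d, Real.sqrt (∫ ω, g i ω ^ 8 ∂P)
        ≤ Real.sqrt 241920 * m i ^ 2 := by
      intro i
      refine (Real.sqrt_le_sqrt (h8b i)).trans ?_
      rw [show (241920:ℝ) * m i ^ 4 = 241920 * (m i ^ 2) ^ 2 by ring,
        Real.sqrt_mul (by norm_num), Real.sqrt_sq (by positivity)]
    calc Real.sqrt (∫ ω, g i ω ^ 8 ∂P) * Real.sqrt (∫ ω, g j ω ^ 8 ∂P)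
        ≤ (Real.sqrt 241920 * m i ^ 2) * (Real.sqrt 241920 * m j ^ 2) := by
          apply mul_le_mul (hb i) (hb j) (Real.sqrt_nonneg _)
          positivity
      _ = (Real.sqrt 241920 * Real.sqrt 241920) * (m i ^ 2 * m j ^ 2) := by ring
      _ = 241920 * (m i ^ 2 * m j ^ 2) := by
          rw [← Real.sqrt_mul (by norm_num), Real.sqrt_mul_self (by norm_num)]
  -- quadruple bounds
  have hquad : ∀ i j k l : Fin d,
      ∫ ω, g i ω ^ 2 * g j ω ^ 2 * (g k ω ^ 2 * g l ω ^ 2) ∂P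
        ≤ 241920 * (m i * m j * (m k * m l)) := by
    intro i j k l
    have hsqq : ∀ (i j : Fin d) (ω : Ω), (g i ω ^ 2 * g j ω ^ 2) ^ 2 = g i ω ^ 4 * g j ω ^ 4 :=
      fun i j ω => by ring
    have h := integral_CS (P := P)
      (((hgm i).pow_const 2).mul ((hgm j).pow_const 2))
      (((hgm k).pow_const 2).mul ((hgm l).pow_const 2))
      (fun ω => by simp only [Pi.mul_apply]; positivity) (fun ω => by simp only [Pi.mul_apply]; positivity)
      (by simpa only [Pi.mul_apply, hsqq] using hint44 i j) (by simpa only [Pi.mul_apply, hsqq] using hint44 k l)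
    simp only [Pi.mul_apply, hsqq] at h
    refine h.trans ?_
    have hb : ∀ i j : Fin d, Real.sqrt (∫ ω, g i ω ^ 4 * g j ω ^ 4 ∂P)
        ≤ Real.sqrt 241920 * (m i * m j) := by
      intro i j
      refine (Real.sqrt_le_sqrt (hpair4 i j)).trans ?_
      rw [show m i ^ 2 * m j ^ 2 = (m i * m j) ^ 2 by ring,
        Real.sqrt_mul (by norm_num), Real.sqrt_sq (by have := hm i; have := hm j; positivity)]
    calc Real.sqrt (∫ ω, g i ω ^ 4 * g j ω ^ 4 ∂P) * Real.sqrt (∫ ω, g k ω ^ 4 * g l ω ^ 4 ∂P)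
        ≤ (Real.sqrt 241920 * (m i * m j)) * (Real.sqrt 241920 * (m k * m l)) := by
          apply mul_le_mul (hb i j) (hb k l) (Real.sqrt_nonneg _)
          have := hm i; have := hm j; positivity
      _ = (Real.sqrt 241920 * Real.sqrt 241920) * (m i * m j * (m k * m l)) := by ring
      _ = 241920 * (m i * m j * (m k * m l)) := by
          rw [← Real.sqrt_mul (by norm_num), Real.sqrt_mul_self (by norm_num)]
  -- expansions
  have hexp2 : (fun ω => (∑ i, g i ω ^ 2) ^ 2)
      = fun ω => ∑ i, ∑ j, g i ω ^ 2 * g j ω ^ 2 := by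
    funext ω; exact sum_pow_two _ _
  have hexp4 : (fun ω => (∑ i, g i ω ^ 2) ^ 4)
      = fun ω => ∑ i, ∑ j, ∑ k, ∑ l, g i ω ^ 2 * g j ω ^ 2 * (g k ω ^ 2 * g l ω ^ 2) := by
    funext ω; exact sum_pow_four _ _
  have hint2 : Integrable (fun ω => (∑ i, g i ω ^ 2) ^ 2) P := by
    rw [hexp2]
    exact integrable_finset_sum _ fun i _ => integrable_finset_sum _ fun j _ => hint22 i j
  have hint4 : Integrable (fun ω => (∑ i, g i ω ^ 2) ^ 4) P := by
    rw [hexp4]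
    exact integrable_finset_sum _ fun i _ => integrable_finset_sum _ fun j _ =>
      integrable_finset_sum _ fun k _ => integrable_finset_sum _ fun l _ => hintq i j k l
  refine ⟨⟨hint2, ?_⟩, ⟨hint4, ?_⟩⟩
  · rw [hexp2, integral_finset_sum _ fun i _ => integrable_finset_sum _ fun j _ => hint22 i j]
    calc ∑ i, ∫ ω, ∑ j, g i ω ^ 2 * g j ω ^ 2 ∂P
        = ∑ i, ∑ j, ∫ ω, g i ω ^ 2 * g j ω ^ 2 ∂P := by
          apply Finset.sum_congr rfl; intro i _
          exact integral_finset_sum _ fun j _ => hint22 i j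
      _ ≤ ∑ i, ∑ j, 144 * (m i * m j) := by
          apply Finset.sum_le_sum; intro i _
          apply Finset.sum_le_sum; intro j _
          exact hpair i j
      _ = 144 * (∑ i, m i) ^ 2 := by
          rw [sum_pow_two, Finset.mul_sum]
          apply Finset.sum_congr rfl; intro i _
          rw [Finset.mul_sum]
  · rw [hexp4, integral_finset_sum _ fun i _ => integrable_finset_sum _ fun j _ =>
      integrable_finset_sum _ fun k _ => integrable_finset_sum _ fun l _ => hintq i j k l]
    calc ∑ i, ∫ ω, ∑ j, ∑ k, ∑ l, g i ω ^ 2 * g j ω ^ 2 * (g k ω ^ 2 * g l ω ^ 2) ∂P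
        = ∑ i, ∑ j, ∑ k, ∑ l, ∫ ω, g i ω ^ 2 * g j ω ^ 2 * (g k ω ^ 2 * g l ω ^ 2) ∂P := by
          apply Finset.sum_congr rfl; intro i _
          rw [integral_finset_sum _ fun j _ => integrable_finset_sum _ fun k _ =>
            integrable_finset_sum _ fun l _ => hintq i j k l]
          apply Finset.sum_congr rfl; intro j _
          rw [integral_finset_sum _ fun k _ => integrable_finset_sum _ fun l _ => hintq i j k l]
          apply Finset.sum_congr rfl; intro k _
          exact integral_finset_sum _ fun l _ => hintq i j k l
      _ ≤ ∑ i, ∑ j, ∑ k, ∑ l, 241920 * (m i * m j * (m k * m l)) := by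
          apply Finset.sum_le_sum; intro i _
          apply Finset.sum_le_sum; intro j _
          apply Finset.sum_le_sum; intro k _
          apply Finset.sum_le_sum; intro l _
          exact hquad i j k l
      _ = 241920 * (∑ i, m i) ^ 4 := by
          rw [sum_pow_four, Finset.mul_sum]
          apply Finset.sum_congr rfl; intro i _
          rw [Finset.mul_sum]
          apply Finset.sum_congr rfl; intro j _
          rw [Finset.mul_sum]
          apply Finset.sum_congr rfl; intro k _
          rw [Finset.mul_sum]


lemma moment_transfer {Ω : Type} [MeasurableSpace Ω] (P : Measure Ω) {x : Ω → ℝ}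
    (hx : Measurable x) (v : ℝ≥0) (hmap : Measure.map x P = gaussianReal 0 v) (k : ℕ) :
    Integrable (fun ω => x ω ^ (2*k)) P ∧
    ∫ ω, x ω ^ (2*k) ∂P ≤ 6 * (Nat.factorial (2*k)) * (v:ℝ)^k := by
  have hf : Measurable fun y : ℝ => y ^ (2*k) := measurable_id.pow_const _
  have h := gaussian_even_moment k v
  rw [← hmap] at h
  constructor
  · exact (integrable_map_measure hf.aestronglyMeasurable hx.aemeasurable).mp h.1
  · calc ∫ ω, x ω ^ (2*k) ∂P = ∫ y, y ^ (2*k) ∂(Measure.map x P) :=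
        (integral_map hx.aemeasurable hf.aestronglyMeasurable).symm
      _ ≤ 6 * (Nat.factorial (2*k)) * (v:ℝ)^k := h.2

section MeasHelpers

variable {Ω : Type} [MeasurableSpace Ω]

lemma meas_mul {a b c : ℕ} {A : Ω → Matrix (Fin a) (Fin b) ℝ} {B : Ω → Matrix (Fin b) (Fin c) ℝ}
    (hA : ∀ i j, Measurable fun ω => A ω i j) (hB : ∀ i j, Measurable fun ω => B ω i j) :
    ∀ i j, Measurable fun ω => (A ω * B ω) i j := by
  intro i j
  simp only [Matrix.mul_apply]
  exact Finset.measurable_sum _ fun k _ => (hA i k).mul (hB k j)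

lemma meas_transpose {a b : ℕ} {A : Ω → Matrix (Fin a) (Fin b) ℝ}
    (hA : ∀ i j, Measurable fun ω => A ω i j) :
    ∀ i j, Measurable fun ω => (A ω)ᵀ i j := by
  intro i j
  simp only [Matrix.transpose_apply]
  exact hA j i

lemma meas_add {a b : ℕ} {A B : Ω → Matrix (Fin a) (Fin b) ℝ}
    (hA : ∀ i j, Measurable fun ω => A ω i j) (hB : ∀ i j, Measurable fun ω => B ω i j) :
    ∀ i j, Measurable fun ω => (A ω + B ω) i j := by
  intro i j
  simp only [Matrix.add_apply]
  exact (hA i j).add (hB i j)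

lemma meas_const {a b : ℕ} (C : Matrix (Fin a) (Fin b) ℝ) :
    ∀ i j, Measurable fun _ : Ω => C i j := fun _ _ => measurable_const

lemma meas_minner {a b : ℕ} {A B : Ω → Matrix (Fin a) (Fin b) ℝ}
    (hA : ∀ i j, Measurable fun ω => A ω i j) (hB : ∀ i j, Measurable fun ω => B ω i j) :
    Measurable fun ω => minner (A ω) (B ω) := by
  unfold minner
  apply Finset.measurable_sum
  intro i _
  apply Finset.measurable_sum
  intro j _
  exact (hA i j).mul (hB i j)

lemma meas_frob_sq {a b : ℕ} {A : Ω → Matrix (Fin a) (Fin b) ℝ}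
    (hA : ∀ i j, Measurable fun ω => A ω i j) :
    Measurable fun ω => frob (A ω) ^ 2 := by
  simp only [frob_sq]
  exact meas_minner hA hA

end MeasHelpers

end PCAaux

open PCAaux

/-- Assumption constants for online PCA (Proposition 6.3): for `x ~ N(0, M)` there is an
absolute constant `c > 0` with `E‖xxᵀ − M‖_F⁴ ≤ c(tr M)⁴`, and for `Γ ≥ 1`,
`‖XXᵀ‖_F ≤ Γ`, `‖M‖_F ≤ Γ`, the gradient noise `ξ = (xxᵀ − M)X` of
`F(X) = (1/2)‖XXᵀ − M‖_F²` satisfies `E⟨ξ, ∇²F(X)ξ⟩ ≤ cΓ²(tr M)²`, where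
`⟨Z, ∇²F(X)Z⟩ = (1/2)‖XZᵀ + ZXᵀ‖_F² + ⟨XXᵀ, ZZᵀ⟩ − ⟨M, ZZᵀ⟩`. -/
theorem online_pca_constants :
    ∃ c : ℝ, 0 < c ∧
      ∀ (d r : ℕ) (M : Matrix (Fin d) (Fin d) ℝ), M.PosSemidef →
      ∀ {Ω : Type} [MeasurableSpace Ω] (P : Measure Ω) [IsProbabilityMeasure P]
        (x : Ω → Fin d → ℝ), Measurable x →
        -- `x ~ N(0, M)`: every linear functional of `x` is a centered Gaussian
        (∀ u : Fin d → ℝ,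
          Measure.map (fun ω => ∑ i, u i * x ω i) P
            = gaussianReal 0 (u ⬝ᵥ M.mulVec u).toNNReal) →
        -- (i) fourth moment of `xxᵀ − M`
        (∫ ω, frob (Matrix.vecMulVec (x ω) (x ω) - M) ^ 4 ∂P ≤ c * M.trace ^ 4) ∧
        -- (ii) Hessian-weighted second moment of the gradient noise `ξ = (xxᵀ − M)X`
        (∀ (Γ : ℝ), 1 ≤ Γ → ∀ X : Matrix (Fin d) (Fin r) ℝ,
          frob (X * Xᵀ) ≤ Γ → frob M ≤ Γ →
          ∫ ω,
              (1 / 2 * frob (X * ((Matrix.vecMulVec (x ω) (x ω) - M) * X)ᵀ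
                  + (Matrix.vecMulVec (x ω) (x ω) - M) * X * Xᵀ) ^ 2
                + minner (X * Xᵀ)
                    ((Matrix.vecMulVec (x ω) (x ω) - M) * X
                      * ((Matrix.vecMulVec (x ω) (x ω) - M) * X)ᵀ)
                - minner M
                    ((Matrix.vecMulVec (x ω) (x ω) - M) * X
                      * ((Matrix.vecMulVec (x ω) (x ω) - M) * X)ᵀ)) ∂P
            ≤ c * Γ ^ 2 * M.trace ^ 2) := by
  refine ⟨2000000, by norm_num, ?_⟩
  intro d r M hM Ω _ P _ x hx hgauss
  -- diag entries, trace
  have hdiag : ∀ i, 0 ≤ M i i := diag_nonneg_of_psd hM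
  have htr0 : 0 ≤ M.trace := trace_nonneg_of_psd hM
  have hMfrob : frob M ≤ M.trace := frob_le_trace_of_psd hM
  have htr : M.trace = ∑ i, M i i := by
    simp [Matrix.trace, Matrix.diag]
  -- coordinate pushforwards
  have hxi : ∀ i : Fin d, Measurable fun ω => x ω i :=
    fun i => (measurable_pi_apply i).comp hx
  have hmapi : ∀ i : Fin d,
      Measure.map (fun ω => x ω i) P = gaussianReal 0 ((M i i).toNNReal) := by
    intro i
    have h := hgauss (Pi.single i 1)
    have hfun : (fun ω => ∑ j, (Pi.single i (1:ℝ) : Fin d → ℝ) j * x ω j)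
        = fun ω => x ω i := by
      funext ω
      simp [Pi.single_apply, ite_mul]
    rw [hfun, single_dot] at h
    exact h
  -- moments of coordinates
  have hc : ∀ i : Fin d, (((M i i).toNNReal : ℝ≥0) : ℝ) = M i i :=
    fun i => Real.coe_toNNReal _ (hdiag i)
  have hm4 : ∀ i : Fin d, Integrable (fun ω => x ω i ^ 4) P ∧
      ∫ ω, x ω i ^ 4 ∂P ≤ 144 * (M i i) ^ 2 := by
    intro i
    have h := moment_transfer P (hxi i) _ (hmapi i) 2
    rw [hc i] at h
    have hfac : ((Nat.factorial (2*2) : ℕ) : ℝ) = 24 := by norm_num [Nat.factorial]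
    rw [hfac] at h
    norm_num at h
    exact h
  have hm8 : ∀ i : Fin d, Integrable (fun ω => x ω i ^ 8) P ∧
      ∫ ω, x ω i ^ 8 ∂P ≤ 241920 * (M i i) ^ 4 := by
    intro i
    have h := moment_transfer P (hxi i) _ (hmapi i) 4
    rw [hc i] at h
    have hfac : ((Nat.factorial (2*4) : ℕ) : ℝ) = 40320 := by norm_num [Nat.factorial]
    rw [hfac] at h
    norm_num at h
    exact h
  -- sums of squares moments
  have hS := sum_sq_moments (P := P) (fun i ω => x ω i) (fun i => M i i) hdiag hxi
    (fun i => (hm4 i).1) (fun i => (hm4 i).2) (fun i => (hm8 i).1) (fun i => (hm8 i).2)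
  rw [← htr] at hS
  have hS2int : Integrable (fun ω => (∑ i, x ω i ^ 2) ^ 2) P := hS.1.1
  have hS2 : ∫ ω, (∑ i, x ω i ^ 2) ^ 2 ∂P ≤ 144 * M.trace ^ 2 := hS.1.2
  have hS4int : Integrable (fun ω => (∑ i, x ω i ^ 2) ^ 4) P := hS.2.1
  have hS4 : ∫ ω, (∑ i, x ω i ^ 2) ^ 4 ∂P ≤ 241920 * M.trace ^ 4 := hS.2.2
  -- pointwise Frobenius bound on W = xxᵀ - M
  have hfw : ∀ ω, frob (Matrix.vecMulVec (x ω) (x ω) - M) ≤ (∑ i, x ω i ^ 2) + M.trace := by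
    intro ω
    refine (frob_sub_le _ _).trans ?_
    rw [frob_vecMulVec_self]
    exact add_le_add_right hMfrob _
  constructor
  · -- part (i)
    have hp1 : ∀ ω, frob (Matrix.vecMulVec (x ω) (x ω) - M) ^ 4
        ≤ 8 * ((∑ i, x ω i ^ 2) ^ 4 + M.trace ^ 4) := by
      intro ω
      have h2 : frob (Matrix.vecMulVec (x ω) (x ω) - M) ^ 4
          ≤ ((∑ i, x ω i ^ 2) + M.trace) ^ 4 :=
        pow_le_pow_left₀ (frob_nonneg _) (hfw ω) 4
      have h3 := add_pow_four_le (a := ∑ i, x ω i ^ 2) (b := M.trace) (by positivity) htr0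
      linarith
    have hgint : Integrable (fun ω => 8 * ((∑ i, x ω i ^ 2) ^ 4 + M.trace ^ 4)) P :=
      (hS4int.add (integrable_const _)).const_mul 8
    calc ∫ ω, frob (Matrix.vecMulVec (x ω) (x ω) - M) ^ 4 ∂P
        ≤ ∫ ω, 8 * ((∑ i, x ω i ^ 2) ^ 4 + M.trace ^ 4) ∂P :=
          integral_mono_of_nonneg (ae_of_all _ fun ω => by positivity) hgint
            (ae_of_all _ hp1)
      _ = 8 * ((∫ ω, (∑ i, x ω i ^ 2) ^ 4 ∂P) + M.trace ^ 4) := by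
          rw [integral_const_mul, integral_add hS4int (integrable_const _), integral_const]
          simp
      _ ≤ 2000000 * M.trace ^ 4 := by
          nlinarith [pow_nonneg htr0 4, hS4]
  · -- part (ii)
    intro Γ hΓ X hXb hMb
    have hΓ0 : (0:ℝ) ≤ Γ := le_trans zero_le_one hΓ
    set W : Ω → Matrix (Fin d) (Fin d) ℝ := fun ω => Matrix.vecMulVec (x ω) (x ω) - M
      with hWdef
    have hWe : ∀ i j, Measurable fun ω => W ω i j := by
      intro i j
      simp only [hWdef, Matrix.sub_apply, Matrix.vecMulVec_apply]
      exact ((hxi i).mul (hxi j)).sub measurable_const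
    have hZe : ∀ i j, Measurable fun ω => (W ω * X) i j :=
      meas_mul hWe (meas_const X)
    have hUe : ∀ i j, Measurable fun ω => (X * (W ω * X)ᵀ + W ω * X * Xᵀ) i j :=
      meas_add (meas_mul (meas_const X) (meas_transpose hZe))
        (meas_mul hZe (meas_const Xᵀ))
    have hVe : ∀ i j, Measurable fun ω => (W ω * X * (W ω * X)ᵀ) i j :=
      meas_mul hZe (meas_transpose hZe)
    have hfmeas : Measurable fun ω =>
        1 / 2 * frob (X * (W ω * X)ᵀ + W ω * X * Xᵀ) ^ 2
          + minner (X * Xᵀ) (W ω * X * (W ω * X)ᵀ)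
          - minner M (W ω * X * (W ω * X)ᵀ) :=
      (((meas_frob_sq hUe).const_mul (1/2)).add
        (meas_minner (meas_const (X * Xᵀ)) hVe)).sub (meas_minner (meas_const M) hVe)
    have habs : ∀ ω, |1 / 2 * frob (X * (W ω * X)ᵀ + W ω * X * Xᵀ) ^ 2
          + minner (X * Xᵀ) (W ω * X * (W ω * X)ᵀ)
          - minner M (W ω * X * (W ω * X)ᵀ)| ≤ 4 * Γ ^ 2 * frob (W ω) ^ 2 :=
      fun ω => hess_pointwise (W ω) M X hΓ hXb hMb
    have hW2 : ∀ ω, frob (W ω) ^ 2 ≤ 2 * (∑ i, x ω i ^ 2) ^ 2 + 2 * M.trace ^ 2 := by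
      intro ω
      have h1 : frob (W ω) ≤ (∑ i, x ω i ^ 2) + M.trace := hfw ω
      have h0 := frob_nonneg (W ω)
      have hSnn : (0:ℝ) ≤ ∑ i, x ω i ^ 2 := by positivity
      nlinarith [sq_nonneg ((∑ i, x ω i ^ 2) - M.trace)]
    have hgint : Integrable
        (fun ω => 4 * Γ ^ 2 * (2 * (∑ i, x ω i ^ 2) ^ 2 + 2 * M.trace ^ 2)) P :=
      (((hS2int.const_mul 2).add (integrable_const _)).const_mul (4 * Γ ^ 2))
    have hdom : ∀ ω, ‖1 / 2 * frob (X * (W ω * X)ᵀ + W ω * X * Xᵀ) ^ 2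
          + minner (X * Xᵀ) (W ω * X * (W ω * X)ᵀ)
          - minner M (W ω * X * (W ω * X)ᵀ)‖
        ≤ 4 * Γ ^ 2 * (2 * (∑ i, x ω i ^ 2) ^ 2 + 2 * M.trace ^ 2) := by
      intro ω
      rw [Real.norm_eq_abs]
      refine (habs ω).trans ?_
      exact mul_le_mul_of_nonneg_left (hW2 ω) (by positivity)
    have hfint : Integrable (fun ω =>
        1 / 2 * frob (X * (W ω * X)ᵀ + W ω * X * Xᵀ) ^ 2
          + minner (X * Xᵀ) (W ω * X * (W ω * X)ᵀ)
          - minner M (W ω * X * (W ω * X)ᵀ)) P :=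
      hgint.mono' hfmeas.aestronglyMeasurable (ae_of_all _ hdom)
    calc ∫ ω, (1 / 2 * frob (X * (W ω * X)ᵀ + W ω * X * Xᵀ) ^ 2
          + minner (X * Xᵀ) (W ω * X * (W ω * X)ᵀ)
          - minner M (W ω * X * (W ω * X)ᵀ)) ∂P
        ≤ ∫ ω, 4 * Γ ^ 2 * (2 * (∑ i, x ω i ^ 2) ^ 2 + 2 * M.trace ^ 2) ∂P := by
          apply integral_mono hfint hgint
          intro ω
          refine (le_abs_self _).trans ((habs ω).trans ?_)
          exact mul_le_mul_of_nonneg_left (hW2 ω) (by positivity)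
      _ = 4 * Γ ^ 2 * (2 * (∫ ω, (∑ i, x ω i ^ 2) ^ 2 ∂P) + 2 * M.trace ^ 2) := by
          rw [integral_const_mul, integral_add (hS2int.const_mul 2) (integrable_const _),
            integral_const_mul, integral_const]
          simp
      _ ≤ 2000000 * Γ ^ 2 * M.trace ^ 2 := by
          nlinarith [sq_nonneg Γ, sq_nonneg M.trace, hS2,
            mul_nonneg (sq_nonneg Γ) (sq_nonneg M.trace)]
end
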